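/- arXiv:1506.00016 — 5 statements merged into one kernel-verified Lean document; each statement's English description precedes it below -/
import Mathlib

section
/- Let u ∈ C¹([0,T]×ℝ₊) be nonnegative and satisfy ∂_t u + ∂_x u + c u = 0 with c continuous. Let l_{i−1}(t) = t + l_{i−1}(0), l_i(t) = t + l_i(0) with 0 ≤ l_{i−1}(0) < l_i(0), and suppose the cohort mass m_i(t) := ∫_{l_{i−1}(t)}^{l_i(t)} u(t,x) dx is strictly positive on [0,T]. Define the cohort location x_i(t) := (1/m_i(t)) ∫_{l_{i−1}(t)}^{l_i(t)} x u(t,x) dx. Then (d/dt) x_i(t) = (1/m_i(t)) ∫_{l_{i−1}(t)}^{l_i(t)} (x_i(t) − x) c(t,x) u(t,x) dx + 1. -/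
open MeasureTheory Set intervalIntegral

open Metric in
/-- Derivative along the diagonal `s ↦ u s (s + y)` from partial derivatives,
assuming the `x`-partial derivative is jointly continuous. -/
lemma diag_hasDerivAt
    (T : ℝ) (u ut ux : ℝ → ℝ → ℝ)
    (hut : ∀ t ∈ Icc (0:ℝ) T, ∀ x ∈ Ici (0:ℝ), HasDerivAt (fun s => u s x) (ut t x) t)
    (hux : ∀ t ∈ Icc (0:ℝ) T, ∀ x ∈ Ici (0:ℝ), HasDerivAt (fun z => u t z) (ux t x) x)
    (hux_cont : ContinuousOn (fun p : ℝ × ℝ => ux p.1 p.2) (Icc 0 T ×ˢ Ici 0))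
    (t : ℝ) (ht : t ∈ Ioo (0:ℝ) T) (y : ℝ) (hy : 0 ≤ y) :
    HasDerivAt (fun s => u s (s + y)) (ut t (t + y) + ux t (t + y)) t := by
  rw [hasDerivAt_iff_isLittleO]
  have hty : (0:ℝ) < t + y := by linarith [ht.1]
  have htIcc : t ∈ Icc (0:ℝ) T := ⟨ht.1.le, ht.2.le⟩
  have hA : (fun s => u s (t + y) - u t (t + y) - (s - t) * ut t (t + y))
      =o[nhds t] fun s => s - t := by
    have := hasDerivAt_iff_isLittleO.mp (hut t htIcc (t + y) hty.le)
    simpa [smul_eq_mul] using this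
  have hB : (fun s => u s (s + y) - u s (t + y) - (s - t) * ux t (t + y))
      =o[nhds t] fun s => s - t := by
    rw [Asymptotics.isLittleO_iff]
    intro ε hε
    have hcontAt : ContinuousAt (fun p : ℝ × ℝ => ux p.1 p.2) (t, t + y) :=
      hux_cont.continuousAt
        (prod_mem_nhds (Icc_mem_nhds ht.1 ht.2) (Ici_mem_nhds hty))
    obtain ⟨δ, hδpos, hδ⟩ := Metric.continuousAt_iff.mp hcontAt ε hε
    have hδ'pos : 0 < min δ (min t (T - t)) :=
      lt_min hδpos (lt_min ht.1 (by linarith [ht.2]))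
    filter_upwards [Metric.ball_mem_nhds t hδ'pos] with s hs
    have hst : |s - t| < min δ (min t (T - t)) := by
      simpa [Real.dist_eq] using hs
    obtain ⟨hst1, hst2⟩ := abs_lt.mp hst
    have hstδ : |s - t| < δ := lt_of_lt_of_le hst (min_le_left _ _)
    have hstt : |s - t| < t := lt_of_lt_of_le hst ((min_le_right _ _).trans (min_le_left _ _))
    have hstT : |s - t| < T - t := lt_of_lt_of_le hst ((min_le_right _ _).trans (min_le_right _ _))
    obtain ⟨h1, h2⟩ := abs_lt.mp hstt
    obtain ⟨h3, h4⟩ := abs_lt.mp hstT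
    have hsIcc : s ∈ Icc (0:ℝ) T := ⟨by linarith, by linarith⟩
    have hmaps : MapsTo (fun z => (s, z)) (uIcc (t + y) (s + y)) (Icc 0 T ×ˢ Ici 0) := by
      intro z hz
      rcases Set.mem_uIcc.mp hz with ⟨hz1, hz2⟩ | ⟨hz1, hz2⟩ <;>
        exact ⟨hsIcc, by simp only [mem_Ici]; linarith [hsIcc.1]⟩
    have hcont : ContinuousOn (fun z => ux s z) (uIcc (t + y) (s + y)) :=
      hux_cont.comp (by fun_prop) hmaps
    have hderiv : ∀ z ∈ uIcc (t + y) (s + y), HasDerivAt (fun z => u s z) (ux s z) z := by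
      intro z hz
      refine hux s hsIcc z ?_
      rcases Set.mem_uIcc.mp hz with ⟨hz1, hz2⟩ | ⟨hz1, hz2⟩ <;> simp only [mem_Ici] <;> linarith
    have hint : IntervalIntegrable (fun z => ux s z) volume (t + y) (s + y) :=
      hcont.intervalIntegrable
    have hFTC : (∫ z in (t + y)..(s + y), ux s z) = u s (s + y) - u s (t + y) :=
      intervalIntegral.integral_eq_sub_of_hasDerivAt hderiv hint
    have hBs : u s (s + y) - u s (t + y) - (s - t) * ux t (t + y)
        = ∫ z in (t + y)..(s + y), (ux s z - ux t (t + y)) := by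
      rw [intervalIntegral.integral_sub hint intervalIntegrable_const, hFTC,
        intervalIntegral.integral_const]
      simp only [smul_eq_mul]
      ring
    rw [hBs]
    have hbound : ∀ z ∈ Set.uIoc (t + y) (s + y), ‖ux s z - ux t (t + y)‖ ≤ ε := by
      intro z hz
      have hz' : |z - (t + y)| ≤ |s - t| := by
        rcases Set.mem_uIoc.mp hz with ⟨hz1, hz2⟩ | ⟨hz1, hz2⟩ <;>
          rw [abs_le] <;>
            constructor <;> linarith [le_abs_self (s - t), neg_abs_le (s - t)]
      have hd : dist ((s, z) : ℝ × ℝ) (t, t + y) < δ := by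
        rw [Prod.dist_eq]
        exact max_lt (by simpa [Real.dist_eq] using hstδ)
          (by simpa [Real.dist_eq] using lt_of_le_of_lt hz' hstδ)
      have := hδ hd
      rw [Real.dist_eq] at this
      exact le_of_lt this
    calc ‖∫ z in (t + y)..(s + y), (ux s z - ux t (t + y))‖
        ≤ ε * |(s + y) - (t + y)| := intervalIntegral.norm_integral_le_of_norm_le_const hbound
      _ = ε * ‖s - t‖ := by rw [Real.norm_eq_abs]; congr 1; ring_nf
  have heq : (fun s => u s (s + y) - u t (t + y)
        - (s - t) • (ut t (t + y) + ux t (t + y)))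
      = fun s => (u s (t + y) - u t (t + y) - (s - t) * ut t (t + y))
        + (u s (s + y) - u s (t + y) - (s - t) * ux t (t + y)) := by
    funext s; simp only [smul_eq_mul]; ring
  rw [heq]
  exact hA.add hB

open Metric in
lemma param_hasDerivAt (F F' : ℝ → ℝ → ℝ) (t ε a b : ℝ) (hε : 0 < ε)
    (hF : ∀ s ∈ Metric.ball t ε, ContinuousOn (fun y => F s y) (uIcc a b))
    (hF' : ContinuousOn (fun p : ℝ × ℝ => F' p.1 p.2) (Icc (t - ε) (t + ε) ×ˢ uIcc a b))
    (hdiff : ∀ y ∈ uIcc a b, ∀ s ∈ Metric.ball t ε, HasDerivAt (fun s => F s y) (F' s y) s) :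
    HasDerivAt (fun s => ∫ y in a..b, F s y) (∫ y in a..b, F' t y) t := by
  obtain ⟨C, hC⟩ := (isCompact_Icc.prod isCompact_uIcc).exists_bound_of_continuousOn hF'
  refine (intervalIntegral.hasDerivAt_integral_of_dominated_loc_of_deriv_le (Metric.ball_mem_nhds t hε) ?_ ?_ ?_
      (bound := fun _ => C) ?_ ?_ ?_).2
  · filter_upwards [Metric.ball_mem_nhds t hε] with s hs
    exact ((hF s hs).mono uIoc_subset_uIcc).aestronglyMeasurable measurableSet_uIoc
  · exact (hF t (Metric.mem_ball_self hε)).intervalIntegrable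
  · have hm : MapsTo (fun y : ℝ => ((t, y) : ℝ × ℝ)) (uIcc a b)
        (Icc (t - ε) (t + ε) ×ˢ uIcc a b) :=
      fun y hy => ⟨⟨by linarith, by linarith⟩, hy⟩
    have : ContinuousOn (fun y => F' t y) (uIcc a b) :=
      hF'.comp (Continuous.continuousOn (by fun_prop)) hm
    exact (this.mono uIoc_subset_uIcc).aestronglyMeasurable measurableSet_uIoc
  · refine Filter.Eventually.of_forall fun y hy s hs => ?_
    refine hC (s, y) ⟨?_, uIoc_subset_uIcc hy⟩
    have : |s - t| < ε := by simpa [Real.dist_eq] using hs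
    obtain ⟨h1, h2⟩ := abs_lt.mp this
    exact ⟨by linarith, by linarith⟩
  · exact intervalIntegrable_const
  · exact Filter.Eventually.of_forall fun y hy s hs => hdiff y (uIoc_subset_uIcc hy) s hs

/-- For a nonnegative `C¹` solution of `∂ₜu + ∂ₓu + c u = 0`,
the location (centroid) of an internal cohort with strictly positive mass
satisfies `(d/dt) xᵢ(t) = (1/mᵢ(t)) ∫_{Ωᵢ(t)} (xᵢ(t) − x) c u dx + 1`. -/
theorem ebt_cohort_location_derivative
    (T : ℝ) (hT : 0 < T)
    (u ut ux c : ℝ → ℝ → ℝ)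
    (hu_nonneg : ∀ t ∈ Icc (0:ℝ) T, ∀ x ∈ Ici (0:ℝ), 0 ≤ u t x)
    (hut : ∀ t ∈ Icc (0:ℝ) T, ∀ x ∈ Ici (0:ℝ), HasDerivAt (fun s => u s x) (ut t x) t)
    (hux : ∀ t ∈ Icc (0:ℝ) T, ∀ x ∈ Ici (0:ℝ), HasDerivAt (fun y => u t y) (ux t x) x)
    (hu_cont : ContinuousOn (fun p : ℝ × ℝ => u p.1 p.2) (Icc 0 T ×ˢ Ici 0))
    (hut_cont : ContinuousOn (fun p : ℝ × ℝ => ut p.1 p.2) (Icc 0 T ×ˢ Ici 0))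
    (hux_cont : ContinuousOn (fun p : ℝ × ℝ => ux p.1 p.2) (Icc 0 T ×ˢ Ici 0))
    (hc_cont : ContinuousOn (fun p : ℝ × ℝ => c p.1 p.2) (Icc 0 T ×ˢ Ici 0))
    (hpde : ∀ t ∈ Icc (0:ℝ) T, ∀ x ∈ Ici (0:ℝ), ut t x + ux t x + c t x * u t x = 0)
    (l₀ l₁ : ℝ) (hl₀ : 0 ≤ l₀) (hl : l₀ < l₁)
    (mi xi : ℝ → ℝ)
    (hmi : ∀ s, mi s = ∫ x in (s + l₀)..(s + l₁), u s x)
    (hmi_pos : ∀ t ∈ Icc (0:ℝ) T, 0 < mi t)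
    (hxi : ∀ s, xi s = (1 / mi s) * ∫ x in (s + l₀)..(s + l₁), x * u s x) :
    ∀ t ∈ Ioo (0:ℝ) T,
      HasDerivAt xi
        ((1 / mi t) * (∫ x in (t + l₀)..(t + l₁), (xi t - x) * (c t x * u t x)) + 1) t := by
  intro t ht
  obtain ⟨ht0, htT⟩ := ht
  have htIcc : t ∈ Icc (0:ℝ) T := ⟨ht0.le, htT.le⟩
  have huI : uIcc l₀ l₁ = Icc l₀ l₁ := uIcc_of_le hl.le
  set ε : ℝ := min t (T - t) / 2 with hεdef
  have hεpos : 0 < ε := by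
    have : 0 < min t (T - t) := lt_min ht0 (by linarith)
    positivity
  have hεt : ε ≤ t / 2 := by
    have := min_le_left t (T - t); rw [hεdef]; linarith
  have hεT : ε ≤ (T - t) / 2 := by
    have := min_le_right t (T - t); rw [hεdef]; linarith
  have hballIoo : ∀ s ∈ Metric.ball t ε, s ∈ Ioo (0:ℝ) T := by
    intro s hs
    have : |s - t| < ε := by simpa [Real.dist_eq] using hs
    obtain ⟨h1, h2⟩ := abs_lt.mp this
    exact ⟨by linarith, by linarith⟩
  -- continuity of the composed maps on the rectangle
  have hRmaps : MapsTo (fun p : ℝ × ℝ => ((p.1, p.1 + p.2) : ℝ × ℝ))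
      (Icc (t - ε) (t + ε) ×ˢ uIcc l₀ l₁) (Icc 0 T ×ˢ Ici 0) := by
    rintro ⟨s, y⟩ ⟨hs, hy⟩
    rw [huI] at hy
    refine ⟨⟨?_, ?_⟩, ?_⟩ <;> simp only [mem_Ici] <;>
      [skip; skip; skip] <;>
      first
        | (have := hs.1; have := hs.2; have := hy.1; linarith)
  have hcomp : Continuous (fun p : ℝ × ℝ => ((p.1, p.1 + p.2) : ℝ × ℝ)) := by fun_prop
  have hucomp : ContinuousOn (fun p : ℝ × ℝ => u p.1 (p.1 + p.2))
      (Icc (t - ε) (t + ε) ×ˢ uIcc l₀ l₁) := hu_cont.comp hcomp.continuousOn hRmaps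
  have hutcomp : ContinuousOn (fun p : ℝ × ℝ => ut p.1 (p.1 + p.2))
      (Icc (t - ε) (t + ε) ×ˢ uIcc l₀ l₁) := hut_cont.comp hcomp.continuousOn hRmaps
  have huxcomp : ContinuousOn (fun p : ℝ × ℝ => ux p.1 (p.1 + p.2))
      (Icc (t - ε) (t + ε) ×ˢ uIcc l₀ l₁) := hux_cont.comp hcomp.continuousOn hRmaps
  have hFcont : ∀ s ∈ Metric.ball t ε, ContinuousOn (fun y => u s (s + y)) (uIcc l₀ l₁) := by
    intro s hs
    have hsI : s ∈ Ioo (0:ℝ) T := hballIoo s hs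
    have hm : MapsTo (fun y : ℝ => ((s, s + y) : ℝ × ℝ)) (uIcc l₀ l₁) (Icc 0 T ×ˢ Ici 0) := by
      intro y hy
      rw [huI] at hy
      exact ⟨⟨hsI.1.le, hsI.2.le⟩, by simp only [mem_Ici]; linarith [hy.1, hsI.1]⟩
    exact hu_cont.comp (Continuous.continuousOn (by fun_prop)) hm
  have hdiag : ∀ y ∈ uIcc l₀ l₁, ∀ s ∈ Metric.ball t ε,
      HasDerivAt (fun s => u s (s + y)) (ut s (s + y) + ux s (s + y)) s := by
    intro y hy s hs
    rw [huI] at hy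
    exact diag_hasDerivAt T u ut ux hut hux hux_cont s (hballIoo s hs) y
      (le_trans hl₀ hy.1)
  -- derivative of the mass
  have hM : HasDerivAt (fun s => ∫ y in l₀..l₁, u s (s + y))
      (∫ y in l₀..l₁, (ut t (t + y) + ux t (t + y))) t :=
    param_hasDerivAt (fun s y => u s (s + y)) (fun s y => ut s (s + y) + ux s (s + y))
      t ε l₀ l₁ hεpos hFcont (hutcomp.add huxcomp) hdiag
  -- derivative of the first moment
  have hN : HasDerivAt (fun s => ∫ y in l₀..l₁, (s + y) * u s (s + y))
      (∫ y in l₀..l₁, (u t (t + y) + (t + y) * (ut t (t + y) + ux t (t + y)))) t := by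
    refine param_hasDerivAt (fun s y => (s + y) * u s (s + y))
      (fun s y => u s (s + y) + (s + y) * (ut s (s + y) + ux s (s + y)))
      t ε l₀ l₁ hεpos ?_ ?_ ?_
    · intro s hs
      exact (Continuous.continuousOn (by fun_prop)).mul (hFcont s hs)
    · exact hucomp.add ((Continuous.continuousOn (by fun_prop)).mul
        (hutcomp.add huxcomp))
    · intro y hy s hs
      have h1 : HasDerivAt (fun s : ℝ => s + y) 1 s := (hasDerivAt_id s).add_const y
      have := h1.fun_mul (hdiag y hy s hs)
      simpa [one_mul, add_comm] using this
  -- identify `mi` and `xi` with the translated integrals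
  have hmiM : ∀ s, mi s = ∫ y in l₀..l₁, u s (s + y) := fun s =>
    (hmi s).trans (integral_comp_add_left (u s) s).symm
  have hNtr : ∀ s, (∫ x in (s + l₀)..(s + l₁), x * u s x)
      = ∫ y in l₀..l₁, (s + y) * u s (s + y) := fun s =>
    (integral_comp_add_left (fun x => x * u s x) s).symm
  have hm0 : mi t ≠ 0 := (hmi_pos t htIcc).ne'
  have hxiN : xi = fun s => (∫ y in l₀..l₁, (s + y) * u s (s + y)) / mi s := by
    funext s
    rw [hxi s, ← hNtr s]
    ring
  have hM' : HasDerivAt mi (∫ y in l₀..l₁, (ut t (t + y) + ux t (t + y))) t := by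
    have : mi = fun s => ∫ y in l₀..l₁, u s (s + y) := funext hmiM
    rw [this]; exact hM
  have hxider : HasDerivAt xi
      (((∫ y in l₀..l₁, (u t (t + y) + (t + y) * (ut t (t + y) + ux t (t + y)))) * mi t
          - (∫ y in l₀..l₁, (t + y) * u t (t + y))
            * (∫ y in l₀..l₁, (ut t (t + y) + ux t (t + y)))) / (mi t) ^ 2) t := by
    rw [hxiN]
    exact hN.div hM' hm0
  convert hxider using 1
  have hmapsT : MapsTo (fun y : ℝ => ((t, t + y) : ℝ × ℝ)) (uIcc l₀ l₁)
      (Icc 0 T ×ˢ Ici 0) := by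
    intro y hy; rw [huI] at hy
    exact ⟨htIcc, by simp only [mem_Ici]; linarith [hy.1]⟩
  have hcu : ContinuousOn (fun y => c t (t + y) * u t (t + y)) (uIcc l₀ l₁) :=
    (hc_cont.comp (Continuous.continuousOn (by fun_prop)) hmapsT).mul
      (hu_cont.comp (Continuous.continuousOn (by fun_prop)) hmapsT)
  have hInt_cu : IntervalIntegrable (fun y => c t (t + y) * u t (t + y)) volume l₀ l₁ :=
    hcu.intervalIntegrable
  have hInt_xcu : IntervalIntegrable (fun y => (t + y) * (c t (t + y) * u t (t + y)))
      volume l₀ l₁ :=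
    ((Continuous.continuousOn (by fun_prop)).mul hcu).intervalIntegrable
  have hInt_u : IntervalIntegrable (fun y => u t (t + y)) volume l₀ l₁ :=
    (hu_cont.comp (Continuous.continuousOn (by fun_prop)) hmapsT).intervalIntegrable
  have hpde' : ∀ y ∈ uIcc l₀ l₁,
      ut t (t + y) + ux t (t + y) = -(c t (t + y) * u t (t + y)) := by
    intro y hy; rw [huI] at hy
    have := hpde t htIcc (t + y) (by simp only [mem_Ici]; linarith [hy.1])
    linarith
  have hM'eq : (∫ y in l₀..l₁, (ut t (t + y) + ux t (t + y)))
      = -(∫ y in l₀..l₁, c t (t + y) * u t (t + y)) := by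
    rw [← intervalIntegral.integral_neg]
    exact intervalIntegral.integral_congr hpde'
  have hN'eq : (∫ y in l₀..l₁, (u t (t + y) + (t + y) * (ut t (t + y) + ux t (t + y))))
      = mi t - ∫ y in l₀..l₁, (t + y) * (c t (t + y) * u t (t + y)) := by
    have hcongr : EqOn (fun y => u t (t + y) + (t + y) * (ut t (t + y) + ux t (t + y)))
        (fun y => u t (t + y) - (t + y) * (c t (t + y) * u t (t + y))) (uIcc l₀ l₁) := by
      intro y hy
      have h := hpde' y hy
      dsimp only
      rw [h]; ring
    rw [intervalIntegral.integral_congr hcongr,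
      intervalIntegral.integral_sub hInt_u hInt_xcu, hmiM t]
  have htarget : (∫ x in (t + l₀)..(t + l₁), (xi t - x) * (c t x * u t x))
      = xi t * (∫ y in l₀..l₁, c t (t + y) * u t (t + y))
        - ∫ y in l₀..l₁, (t + y) * (c t (t + y) * u t (t + y)) := by
    rw [← integral_comp_add_left (fun x => (xi t - x) * (c t x * u t x)) t]
    have hcongr : EqOn (fun y => (xi t - (t + y)) * (c t (t + y) * u t (t + y)))
        (fun y => xi t * (c t (t + y) * u t (t + y))
          - (t + y) * (c t (t + y) * u t (t + y))) (uIcc l₀ l₁) := by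
      intro y _; dsimp only; ring
    rw [intervalIntegral.integral_congr hcongr,
      intervalIntegral.integral_sub (hInt_cu.const_mul _) hInt_xcu,
      intervalIntegral.integral_const_mul]
  have hxit : xi t = (∫ y in l₀..l₁, (t + y) * u t (t + y)) / mi t := by rw [hxiN]
  rw [htarget, hM'eq, hN'eq, hxit]
  field_simp
  ring
end

section
/- Let u ∈ C¹([t_n,t_{n+1}]×ℝ₊) be nonnegative and satisfy ∂_t u + ∂_x u + c u = 0 with c continuous. Let the boundary cohort be Ω_B(t) = [0, l_B(t)) with l_B(t) = t − t_n, and define Π_B(t) := ∫_{Ω_B(t)} x u(t,x) dx and m_B(t) := ∫_{Ω_B(t)} u(t,x) dx. Then for t ∈ (t_n,t_{n+1}): (d/dt) Π_B(t) = −∫_{Ω_B(t)} x c(t,x) u(t,x) dx + m_B(t). -/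
open MeasureTheory Set intervalIntegral

lemma ebt_aux_moving (tn tn1 : ℝ) (f g : ℝ → ℝ → ℝ)
    (hf_cont : ContinuousOn (fun p : ℝ × ℝ => f p.1 p.2) (Icc tn tn1 ×ˢ Ici 0))
    (hg_cont : ContinuousOn (fun p : ℝ × ℝ => g p.1 p.2) (Icc tn tn1 ×ˢ Ici 0))
    (hderiv : ∀ s ∈ Icc tn tn1, ∀ x ∈ Ici (0:ℝ), HasDerivAt (fun r => f r x) (g s x) s)
    {t : ℝ} (ht : t ∈ Ioo tn tn1) :
    HasDerivAt (fun s => ∫ x in (0:ℝ)..(s - tn), f s x)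
      (f t (t - tn) + ∫ x in (0:ℝ)..(t - tn), g t x) t := by
  obtain ⟨ht1, ht2⟩ := ht
  set l : ℝ := t - tn with hl
  have hl0 : 0 < l := by simp [hl]; linarith
  have hlL : l < tn1 - tn := by simp [hl]; linarith
  -- sections are continuous
  have hfx : ∀ s ∈ Icc tn tn1, ContinuousOn (fun x => f s x) (Ici 0) := by
    intro s hs
    exact hf_cont.comp ((continuous_const.prodMk continuous_id).continuousOn)
      (fun x hx => ⟨hs, hx⟩)
  have hgx : ∀ s ∈ Icc tn tn1, ContinuousOn (fun x => g s x) (Ici 0) := by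
    intro s hs
    exact hg_cont.comp ((continuous_const.prodMk continuous_id).continuousOn)
      (fun x hx => ⟨hs, hx⟩)
  have hsub : ∀ {a b : ℝ}, 0 ≤ a → 0 ≤ b → uIcc a b ⊆ Ici (0:ℝ) := by
    intro a b ha hb x hx
    exact le_trans (le_min ha hb) hx.1
  have hint : ∀ s ∈ Icc tn tn1, ∀ {a b : ℝ}, 0 ≤ a → 0 ≤ b →
      IntervalIntegrable (fun x => f s x) volume a b := by
    intro s hs a b ha hb
    exact ((hfx s hs).mono (hsub ha hb)).intervalIntegrable
  -- bound for g on compact set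
  obtain ⟨M, hM⟩ : ∃ M, ∀ p ∈ Icc tn tn1 ×ˢ Icc (0:ℝ) (tn1 - tn), ‖g p.1 p.2‖ ≤ M := by
    refine (isCompact_Icc.prod isCompact_Icc).exists_bound_of_continuousOn
      (hg_cont.mono ?_)
    exact Set.prod_mono le_rfl (Icc_subset_Ici_self)
  -- small radius
  set ε : ℝ := min (t - tn) (tn1 - t) with hε
  have hε0 : 0 < ε := lt_min (by linarith) (by linarith)
  have hball : ∀ s ∈ Metric.ball t ε, s ∈ Ioo tn tn1 := by
    intro s hs
    rw [Metric.mem_ball, Real.dist_eq] at hs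
    constructor
    · have := abs_lt.1 hs
      have h1 : ε ≤ t - tn := min_le_left _ _
      linarith [this.1]
    · have := abs_lt.1 hs
      have h2 : ε ≤ tn1 - t := min_le_right _ _
      linarith [this.2]
  -- F₂ : fixed-endpoints parametric integral
  have hF2 : HasDerivAt (fun s => ∫ x in (0:ℝ)..l, f s x)
      (∫ x in (0:ℝ)..l, g t x) t := by
    have := intervalIntegral.hasDerivAt_integral_of_dominated_loc_of_deriv_le
      (F := fun s x => f s x) (F' := fun s x => g s x) (a := (0:ℝ)) (b := l) (x₀ := t)
      (bound := fun _ => M) (μ := volume) (Metric.ball_mem_nhds t hε0)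
      ?_ ?_ ?_ ?_ ?_ ?_
    · exact this.2
    · filter_upwards [Ioo_mem_nhds ht1 ht2] with s hs
      refine ((hfx s (Ioo_subset_Icc_self hs)).mono ?_).aestronglyMeasurable measurableSet_uIoc
      rw [uIoc_of_le hl0.le]
      exact fun x hx => le_of_lt hx.1
    · exact hint t (Ioo_subset_Icc_self ⟨ht1, ht2⟩) le_rfl hl0.le
    · refine ((hgx t (Ioo_subset_Icc_self ⟨ht1, ht2⟩)).mono ?_).aestronglyMeasurable
        measurableSet_uIoc
      rw [uIoc_of_le hl0.le]
      exact fun x hx => le_of_lt hx.1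
    · refine Filter.Eventually.of_forall (fun x hx s hs => ?_)
      rw [uIoc_of_le hl0.le] at hx
      have hs' := hball s hs
      exact hM (s, x) ⟨Ioo_subset_Icc_self hs', ⟨hx.1.le, hx.2.trans hlL.le⟩⟩
    · exact intervalIntegrable_const
    · refine Filter.Eventually.of_forall (fun x hx s hs => ?_)
      rw [uIoc_of_le hl0.le] at hx
      exact hderiv s (Ioo_subset_Icc_self (hball s hs)) x hx.1.le
  -- F₁ : moving endpoint
  have hF1 : HasDerivAt (fun s => ∫ x in l..(s - tn), f s x) (f t l) t := by
    rw [hasDerivAt_iff_isLittleO]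
    rw [Asymptotics.isLittleO_iff]
    intro c hc
    -- continuity at (t, l)
    have hmem : Icc tn tn1 ×ˢ Ici (0:ℝ) ∈ nhds ((t, l) : ℝ × ℝ) := by
      refine Filter.mem_of_superset ((isOpen_Ioo.prod isOpen_Ioi).mem_nhds ⟨⟨ht1, ht2⟩, hl0⟩) ?_
      exact Set.prod_mono Ioo_subset_Icc_self Ioi_subset_Ici_self
    have hca : ContinuousAt (fun p : ℝ × ℝ => f p.1 p.2) (t, l) :=
      hf_cont.continuousAt hmem
    rw [Metric.continuousAt_iff] at hca
    obtain ⟨δ, hδ0, hδ⟩ := hca c hc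
    set η : ℝ := min δ ε with hη
    have hη0 : 0 < η := lt_min hδ0 hε0
    rw [Metric.eventually_nhds_iff]
    refine ⟨η, hη0, fun s hs => ?_⟩
    rw [Real.dist_eq] at hs
    have hsball : s ∈ Metric.ball t ε := by
      rw [Metric.mem_ball, Real.dist_eq]
      exact lt_of_lt_of_le hs (min_le_right _ _)
    have hsIoo := hball s hsball
    have hs_tn : 0 < s - tn := by linarith [hsIoo.1]
    -- the estimate
    have hbound : ∀ x ∈ Set.uIoc l (s - tn), ‖f s x - f t l‖ ≤ c := by
      intro x hx
      have hx' : x ∈ uIcc l (s - tn) := Ioc_subset_Icc_self hx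
      have hxl : |x - l| ≤ |s - t| := by
        rcases le_total l (s - tn) with h | h
        · rw [uIcc_of_le h] at hx'
          rw [abs_le]
          constructor
          · linarith [hx'.1, abs_nonneg (s - t)]
          · linarith [hx'.2, le_abs_self (s - t)]
        · rw [uIcc_of_ge h] at hx'
          rw [abs_le]
          constructor
          · have h1 : |t - s| ≤ |s - t| := by rw [abs_sub_comm]
            linarith [hx'.1, le_abs_self (t - s)]
          · linarith [hx'.2, abs_nonneg (s - t)]
      have hd : dist ((s, x) : ℝ × ℝ) (t, l) < δ := by
        rw [Prod.dist_eq]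
        refine max_lt ?_ ?_
        · rw [Real.dist_eq]; exact lt_of_lt_of_le hs (min_le_left _ _)
        · rw [Real.dist_eq]
          exact lt_of_le_of_lt hxl (lt_of_lt_of_le hs (min_le_left _ _))
      exact (le_of_lt (hδ hd))
    have hInt : IntervalIntegrable (fun x => f s x) volume l (s - tn) :=
      hint s (Ioo_subset_Icc_self hsIoo) hl0.le hs_tn.le
    have key : (∫ x in l..(s - tn), f s x) - (∫ x in l..l, f t x) - (s - t) • f t l
        = ∫ x in l..(s - tn), (f s x - f t l) := by
      rw [intervalIntegral.integral_sub hInt intervalIntegrable_const]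
      rw [intervalIntegral.integral_const, intervalIntegral.integral_same]
      have hst : s - tn - l = s - t := by rw [hl]; ring
      rw [hst]
      ring
    rw [key]
    calc ‖∫ x in l..(s - tn), (f s x - f t l)‖
        ≤ c * |s - tn - l| := intervalIntegral.norm_integral_le_of_norm_le_const hbound
      _ = c * ‖s - t‖ := by
          congr 1
          rw [Real.norm_eq_abs]
          congr 1
          rw [hl]; ring
  -- combine and transfer
  have hsum := hF2.add hF1
  have heq : (fun s => ∫ x in (0:ℝ)..(s - tn), f s x)
      =ᶠ[nhds t] (fun s => (∫ x in (0:ℝ)..l, f s x) + ∫ x in l..(s - tn), f s x) := by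
    filter_upwards [Ioo_mem_nhds ht1 ht2] with s hs
    have hs_tn : 0 < s - tn := by linarith [hs.1]
    rw [intervalIntegral.integral_add_adjacent_intervals
      (hint s (Ioo_subset_Icc_self hs) le_rfl hl0.le)
      (hint s (Ioo_subset_Icc_self hs) hl0.le hs_tn.le)]
  have hfinal := hsum.congr_of_eventuallyEq heq
  rw [add_comm]; exact hfinal

/-- For a nonnegative `C¹` solution of `∂ₜu + ∂ₓu + c u = 0`,
the first moment `Π_B` of the boundary cohort `Ω_B(t) = [0, t − tₙ)` satisfies
`(d/dt) Π_B(t) = −∫_{Ω_B(t)} x c u dx + m_B(t)`. -/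
theorem ebt_boundary_cohort_first_moment_derivative
    (tn tn1 : ℝ) (htn : tn < tn1)
    (u ut ux c : ℝ → ℝ → ℝ)
    (hu_nonneg : ∀ t ∈ Icc tn tn1, ∀ x ∈ Ici (0:ℝ), 0 ≤ u t x)
    (hut : ∀ t ∈ Icc tn tn1, ∀ x ∈ Ici (0:ℝ), HasDerivAt (fun s => u s x) (ut t x) t)
    (hux : ∀ t ∈ Icc tn tn1, ∀ x ∈ Ici (0:ℝ), HasDerivAt (fun y => u t y) (ux t x) x)
    (hu_cont : ContinuousOn (fun p : ℝ × ℝ => u p.1 p.2) (Icc tn tn1 ×ˢ Ici 0))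
    (hut_cont : ContinuousOn (fun p : ℝ × ℝ => ut p.1 p.2) (Icc tn tn1 ×ˢ Ici 0))
    (hux_cont : ContinuousOn (fun p : ℝ × ℝ => ux p.1 p.2) (Icc tn tn1 ×ˢ Ici 0))
    (hc_cont : ContinuousOn (fun p : ℝ × ℝ => c p.1 p.2) (Icc tn tn1 ×ˢ Ici 0))
    (hpde : ∀ t ∈ Icc tn tn1, ∀ x ∈ Ici (0:ℝ), ut t x + ux t x + c t x * u t x = 0)
    (PiB mB : ℝ → ℝ)
    (hPiB : ∀ s, PiB s = ∫ x in (0:ℝ)..(s - tn), x * u s x)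
    (hmB : ∀ s, mB s = ∫ x in (0:ℝ)..(s - tn), u s x) :
    ∀ t ∈ Ioo tn tn1,
      HasDerivAt PiB ((-∫ x in (0:ℝ)..(t - tn), x * (c t x * u t x)) + mB t) t := by
  intro t ht
  obtain ⟨ht1, ht2⟩ := ht
  have htIcc : t ∈ Icc tn tn1 := ⟨ht1.le, ht2.le⟩
  have hl0 : (0:ℝ) ≤ t - tn := by linarith
  -- apply the auxiliary lemma with f = x·u, g = x·ut
  have hf_cont : ContinuousOn (fun p : ℝ × ℝ => p.2 * u p.1 p.2) (Icc tn tn1 ×ˢ Ici 0) :=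
    continuous_snd.continuousOn.mul hu_cont
  have hg_cont : ContinuousOn (fun p : ℝ × ℝ => p.2 * ut p.1 p.2) (Icc tn tn1 ×ˢ Ici 0) :=
    continuous_snd.continuousOn.mul hut_cont
  have hderiv : ∀ s ∈ Icc tn tn1, ∀ x ∈ Ici (0:ℝ),
      HasDerivAt (fun r => x * u r x) (x * ut s x) s :=
    fun s hs x hx => (hut s hs x hx).const_mul x
  have key := ebt_aux_moving tn tn1 (fun s x => x * u s x) (fun s x => x * ut s x)
    hf_cont hg_cont hderiv ⟨ht1, ht2⟩
  have hPiB' : PiB = fun s => ∫ x in (0:ℝ)..(s - tn), x * u s x := funext hPiB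
  rw [hPiB']
  -- section continuity at time t
  have hsecu : ContinuousOn (fun x => u t x) (Ici 0) :=
    hu_cont.comp ((continuous_const.prodMk continuous_id).continuousOn)
      (fun x hx => ⟨htIcc, hx⟩)
  have hsecux : ContinuousOn (fun x => ux t x) (Ici 0) :=
    hux_cont.comp ((continuous_const.prodMk continuous_id).continuousOn)
      (fun x hx => ⟨htIcc, hx⟩)
  have hsecc : ContinuousOn (fun x => c t x) (Ici 0) :=
    hc_cont.comp ((continuous_const.prodMk continuous_id).continuousOn)
      (fun x hx => ⟨htIcc, hx⟩)
  have hssub : uIcc (0:ℝ) (t - tn) ⊆ Ici 0 := by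
    rw [uIcc_of_le hl0]; exact fun x hx => hx.1
  have i1 : IntervalIntegrable (fun x => -(x * ux t x)) volume 0 (t - tn) :=
    (((continuous_id.continuousOn.mul hsecux).mono hssub).neg).intervalIntegrable
  have i2 : IntervalIntegrable (fun x => x * (c t x * u t x)) volume 0 (t - tn) :=
    ((continuous_id.continuousOn.mul (hsecc.mul hsecu)).mono hssub).intervalIntegrable
  have i3 : IntervalIntegrable (fun x => ux t x) volume 0 (t - tn) :=
    (hsecux.mono hssub).intervalIntegrable
  -- rewrite ∫ x·ut via PDE
  have e1 : (∫ x in (0:ℝ)..(t - tn), x * ut t x)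
      = ∫ x in (0:ℝ)..(t - tn), (-(x * ux t x) - x * (c t x * u t x)) := by
    refine intervalIntegral.integral_congr (fun x hx => ?_)
    have h0 : x ∈ Ici (0:ℝ) := hssub hx
    have hp := hpde t htIcc x h0
    linear_combination x * hp
  have e2 : (∫ x in (0:ℝ)..(t - tn), (-(x * ux t x) - x * (c t x * u t x)))
      = (-(∫ x in (0:ℝ)..(t - tn), x * ux t x)) - ∫ x in (0:ℝ)..(t - tn), x * (c t x * u t x) := by
    rw [intervalIntegral.integral_sub i1 i2, intervalIntegral.integral_neg]
  -- integration by parts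
  have e3 : (∫ x in (0:ℝ)..(t - tn), x * ux t x)
      = (t - tn) * u t (t - tn) - 0 * u t 0 - ∫ x in (0:ℝ)..(t - tn), 1 * u t x := by
    refine intervalIntegral.integral_mul_deriv_eq_deriv_mul
      (u := fun x => x) (u' := fun _ => 1) (v := fun x => u t x) (v' := fun x => ux t x)
      (fun x _ => hasDerivAt_id x) (fun x hx => hux t htIcc x (hssub hx))
      intervalIntegrable_const i3
  have e4 : (∫ x in (0:ℝ)..(t - tn), 1 * u t x) = mB t := by
    rw [hmB t]
    exact intervalIntegral.integral_congr (fun x _ => one_mul _)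
  convert key using 1
  rw [e1, e2, e3, e4]
  ring
end

section
/- Let u^c ∈ C¹([0,T]×ℝ₊²) be nonnegative and satisfy ∂_t u^c + ∂_x u^c + ∂_y u^c + c^c u^c = 𝒯 with c^c, 𝒯 continuous. With the moving rectangle Ω^c_{ij}(t) = [l^m_{i−1}(t), l^m_i(t)) × [l^f_{j−1}(t), l^f_j(t)), all four edges moving with unit speed (l(t) = t + l(0)), define the first moments (x̄^c_{ij}(t), ȳ^c_{ij}(t)) := ∬_{Ω^c_{ij}(t)} (x,y) u^c(t,x,y) dx dy and the mass m^c_{ij}(t) := ∬_{Ω^c_{ij}(t)} u^c(t,x,y) dx dy. Then (d/dt)(x̄^c_{ij}(t), ȳ^c_{ij}(t)) = ∬_{Ω^c_{ij}(t)} (x,y) [𝒯(t,x,y) − c^c(t,x,y) u^c(t,x,y)] dx dy + (1,1) m^c_{ij}(t). -/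
open MeasureTheory Set

lemma abs_sub_le_of_mem_uIcc {a b x : ℝ} (h : x ∈ uIcc a b) : |x - a| ≤ |b - a| := by
  rw [Set.mem_uIcc] at h
  have h1 := le_abs_self (b - a)
  have h2 := neg_abs_le (b - a)
  rw [abs_le]
  rcases h with ⟨ha, hb⟩ | ⟨ha, hb⟩ <;> constructor <;> linarith

lemma shift_integral (f : ℝ × ℝ → ℝ) (s a₁ b₁ a₂ b₂ : ℝ) :
    (∫ p in Icc (s + a₁) (s + b₁) ×ˢ Icc (s + a₂) (s + b₂), f p)
      = ∫ q in Icc a₁ b₁ ×ˢ Icc a₂ b₂, f (q.1 + s, q.2 + s) := by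
  have hmp : MeasurePreserving (fun x : ℝ × ℝ => x + (s, s)) volume volume :=
    measurePreserving_add_right volume (s, s)
  have hemb : MeasurableEmbedding (fun x : ℝ × ℝ => x + (s, s)) :=
    (MeasurableEquiv.addRight (s, s)).measurableEmbedding
  have hpre : (fun x : ℝ × ℝ => x + (s, s)) ⁻¹' (Icc (s + a₁) (s + b₁) ×ˢ Icc (s + a₂) (s + b₂))
      = Icc a₁ b₁ ×ˢ Icc a₂ b₂ := by
    ext ⟨x, y⟩
    simp only [Set.mem_preimage, Set.mem_prod, Set.mem_Icc, Prod.mk_add_mk]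
    constructor <;> rintro ⟨⟨h1, h2⟩, h3, h4⟩ <;>
      exact ⟨⟨by linarith, by linarith⟩, by linarith, by linarith⟩
  calc (∫ p in Icc (s + a₁) (s + b₁) ×ˢ Icc (s + a₂) (s + b₂), f p)
      = ∫ q in (fun x : ℝ × ℝ => x + (s, s)) ⁻¹' (Icc (s + a₁) (s + b₁) ×ˢ Icc (s + a₂) (s + b₂)),
          f (q + (s, s)) := (hmp.setIntegral_preimage_emb hemb f _).symm
    _ = ∫ q in Icc a₁ b₁ ×ˢ Icc a₂ b₂, f (q.1 + s, q.2 + s) := by rw [hpre]; rfl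

lemma chain_line (U Ut Ux Uy : ℝ → ℝ × ℝ → ℝ) (A B t₀ : ℝ)
    (V : Set (ℝ × (ℝ × ℝ))) (hV : V ∈ nhds (t₀, (A + t₀, B + t₀)))
    (hUt : ∀ q ∈ V, HasDerivAt (fun s => U s q.2) (Ut q.1 q.2) q.1)
    (hUx : ∀ q ∈ V, HasDerivAt (fun x => U q.1 (x, q.2.2)) (Ux q.1 q.2) q.2.1)
    (hUy : ∀ q ∈ V, HasDerivAt (fun y => U q.1 (q.2.1, y)) (Uy q.1 q.2) q.2.2)
    (hUtc : ContinuousAt (fun q : ℝ × (ℝ × ℝ) => Ut q.1 q.2) (t₀, (A + t₀, B + t₀)))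
    (hUxc : ContinuousAt (fun q : ℝ × (ℝ × ℝ) => Ux q.1 q.2) (t₀, (A + t₀, B + t₀)))
    (hUyc : ContinuousAt (fun q : ℝ × (ℝ × ℝ) => Uy q.1 q.2) (t₀, (A + t₀, B + t₀))) :
    HasDerivAt (fun s => U s (A + s, B + s))
      (Ut t₀ (A + t₀, B + t₀) + Ux t₀ (A + t₀, B + t₀) + Uy t₀ (A + t₀, B + t₀)) t₀ := by
  rw [hasDerivAt_iff_isLittleO, Asymptotics.isLittleO_iff]
  intro cc hcc
  have hη : (0:ℝ) < cc / 3 := by linarith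
  have h1 : (fun q : ℝ × (ℝ × ℝ) => Ut q.1 q.2) ⁻¹' Metric.ball (Ut t₀ (A + t₀, B + t₀)) (cc/3)
      ∈ nhds ((t₀, (A + t₀, B + t₀)) : ℝ × (ℝ × ℝ)) := hUtc (Metric.ball_mem_nhds _ hη)
  have h2 : (fun q : ℝ × (ℝ × ℝ) => Ux q.1 q.2) ⁻¹' Metric.ball (Ux t₀ (A + t₀, B + t₀)) (cc/3)
      ∈ nhds ((t₀, (A + t₀, B + t₀)) : ℝ × (ℝ × ℝ)) := hUxc (Metric.ball_mem_nhds _ hη)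
  have h3 : (fun q : ℝ × (ℝ × ℝ) => Uy q.1 q.2) ⁻¹' Metric.ball (Uy t₀ (A + t₀, B + t₀)) (cc/3)
      ∈ nhds ((t₀, (A + t₀, B + t₀)) : ℝ × (ℝ × ℝ)) := hUyc (Metric.ball_mem_nhds _ hη)
  obtain ⟨δ, hδ, hδsub⟩ := Metric.mem_nhds_iff.1
    (Filter.inter_mem (Filter.inter_mem (Filter.inter_mem hV h1) h2) h3)
  filter_upwards [Metric.ball_mem_nhds t₀ hδ] with s hs
  have hs' : |s - t₀| < δ := by rwa [Metric.mem_ball, Real.dist_eq] at hs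
  have hmem : ∀ σ x y : ℝ, |σ - t₀| ≤ |s - t₀| → |x - (A + t₀)| ≤ |s - t₀| →
      |y - (B + t₀)| ≤ |s - t₀| →
      ((σ, (x, y)) : ℝ × (ℝ × ℝ)) ∈ Metric.ball ((t₀, (A + t₀, B + t₀)) : ℝ × (ℝ × ℝ)) δ := by
    intro σ x y hx1 hx2 hx3
    rw [Metric.mem_ball, Prod.dist_eq, Prod.dist_eq]
    simp only [Real.dist_eq]
    exact max_lt (lt_of_le_of_lt hx1 hs') (max_lt (lt_of_le_of_lt hx2 hs') (lt_of_le_of_lt hx3 hs'))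
  -- Estimate 1 : time direction
  have est1 : ‖(U s (A + s, B + s) - s * Ut t₀ (A + t₀, B + t₀))
      - (U t₀ (A + s, B + s) - t₀ * Ut t₀ (A + t₀, B + t₀))‖ ≤ cc/3 * ‖s - t₀‖ := by
    have hAB1 : |A + s - (A + t₀)| ≤ |s - t₀| := by rw [show A + s - (A + t₀) = s - t₀ by ring]
    have hAB2 : |B + s - (B + t₀)| ≤ |s - t₀| := by rw [show B + s - (B + t₀) = s - t₀ by ring]
    refine Convex.norm_image_sub_le_of_norm_hasDerivWithin_le
      (f := fun σ => U σ (A + s, B + s) - σ * Ut t₀ (A + t₀, B + t₀))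
      (f' := fun σ => Ut σ (A + s, B + s) - Ut t₀ (A + t₀, B + t₀))
      (fun σ hσ => ?_) (fun σ hσ => ?_) (convex_uIcc t₀ s) left_mem_uIcc right_mem_uIcc
    · have hQ := hδsub (hmem σ (A + s) (B + s) (abs_sub_le_of_mem_uIcc hσ) hAB1 hAB2)
      exact ((hUt _ hQ.1.1.1).sub (hasDerivAt_mul_const _)).hasDerivWithinAt
    · have hQ := hδsub (hmem σ (A + s) (B + s) (abs_sub_le_of_mem_uIcc hσ) hAB1 hAB2)
      have := hQ.1.1.2
      rw [Set.mem_preimage, Metric.mem_ball, Real.dist_eq] at this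
      exact le_of_lt this
  -- Estimate 2 : x direction
  have est2 : ‖(U t₀ (A + s, B + s) - (A + s) * Ux t₀ (A + t₀, B + t₀))
      - (U t₀ (A + t₀, B + s) - (A + t₀) * Ux t₀ (A + t₀, B + t₀))‖
      ≤ cc/3 * ‖s - t₀‖ := by
    have hAB2 : |B + s - (B + t₀)| ≤ |s - t₀| := by rw [show B + s - (B + t₀) = s - t₀ by ring]
    have key := Convex.norm_image_sub_le_of_norm_hasDerivWithin_le
      (f := fun x => U t₀ (x, B + s) - x * Ux t₀ (A + t₀, B + t₀))
      (f' := fun x => Ux t₀ (x, B + s) - Ux t₀ (A + t₀, B + t₀))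
      (s := uIcc (A + t₀) (A + s)) (C := cc/3)
      (fun x hx => ?_) (fun x hx => ?_) (convex_uIcc _ _) left_mem_uIcc right_mem_uIcc
    · rw [show A + s - (A + t₀) = s - t₀ by ring] at key
      exact key
    · have hx' : |x - (A + t₀)| ≤ |s - t₀| := by
        have := abs_sub_le_of_mem_uIcc hx
        rwa [show A + s - (A + t₀) = s - t₀ by ring] at this
      have hQ := hδsub (hmem t₀ x (B + s) (by simp) hx' hAB2)
      exact ((hUx _ hQ.1.1.1).sub (hasDerivAt_mul_const _)).hasDerivWithinAt
    · have hx' : |x - (A + t₀)| ≤ |s - t₀| := by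
        have := abs_sub_le_of_mem_uIcc hx
        rwa [show A + s - (A + t₀) = s - t₀ by ring] at this
      have hQ := hδsub (hmem t₀ x (B + s) (by simp) hx' hAB2)
      have := hQ.1.2
      rw [Set.mem_preimage, Metric.mem_ball, Real.dist_eq] at this
      exact le_of_lt this
  -- Estimate 3 : y direction
  have est3 : ‖(U t₀ (A + t₀, B + s) - (B + s) * Uy t₀ (A + t₀, B + t₀))
      - (U t₀ (A + t₀, B + t₀) - (B + t₀) * Uy t₀ (A + t₀, B + t₀))‖
      ≤ cc/3 * ‖s - t₀‖ := by
    have key := Convex.norm_image_sub_le_of_norm_hasDerivWithin_le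
      (f := fun y => U t₀ (A + t₀, y) - y * Uy t₀ (A + t₀, B + t₀))
      (f' := fun y => Uy t₀ (A + t₀, y) - Uy t₀ (A + t₀, B + t₀))
      (s := uIcc (B + t₀) (B + s)) (C := cc/3)
      (fun y hy => ?_) (fun y hy => ?_) (convex_uIcc _ _) left_mem_uIcc right_mem_uIcc
    · rw [show B + s - (B + t₀) = s - t₀ by ring] at key
      exact key
    · have hy' : |y - (B + t₀)| ≤ |s - t₀| := by
        have := abs_sub_le_of_mem_uIcc hy
        rwa [show B + s - (B + t₀) = s - t₀ by ring] at this
      have hQ := hδsub (hmem t₀ (A + t₀) y (by simp) (by simp) hy')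
      exact ((hUy _ hQ.1.1.1).sub (hasDerivAt_mul_const _)).hasDerivWithinAt
    · have hy' : |y - (B + t₀)| ≤ |s - t₀| := by
        have := abs_sub_le_of_mem_uIcc hy
        rwa [show B + s - (B + t₀) = s - t₀ by ring] at this
      have hQ := hδsub (hmem t₀ (A + t₀) y (by simp) (by simp) hy')
      have := hQ.2
      rw [Set.mem_preimage, Metric.mem_ball, Real.dist_eq] at this
      exact le_of_lt this
  have hsplit : U s (A + s, B + s) - U t₀ (A + t₀, B + t₀)
      - (s - t₀) • (Ut t₀ (A + t₀, B + t₀) + Ux t₀ (A + t₀, B + t₀) + Uy t₀ (A + t₀, B + t₀))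
      = ((U s (A + s, B + s) - s * Ut t₀ (A + t₀, B + t₀))
          - (U t₀ (A + s, B + s) - t₀ * Ut t₀ (A + t₀, B + t₀)))
        + ((U t₀ (A + s, B + s) - (A + s) * Ux t₀ (A + t₀, B + t₀))
          - (U t₀ (A + t₀, B + s) - (A + t₀) * Ux t₀ (A + t₀, B + t₀)))
        + ((U t₀ (A + t₀, B + s) - (B + s) * Uy t₀ (A + t₀, B + t₀))
          - (U t₀ (A + t₀, B + t₀) - (B + t₀) * Uy t₀ (A + t₀, B + t₀))) := by
    simp only [smul_eq_mul]; ring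
  rw [hsplit]
  calc ‖_ + _ + _‖ ≤ ‖_ + _‖ + ‖_‖ := norm_add_le _ _
    _ ≤ ‖_‖ + ‖_‖ + ‖_‖ := by gcongr; exact norm_add_le _ _
    _ ≤ cc/3 * ‖s - t₀‖ + cc/3 * ‖s - t₀‖ + cc/3 * ‖s - t₀‖ := by gcongr
    _ = cc * ‖s - t₀‖ := by ring

lemma moment_deriv
    (T : ℝ) (u ut ux uy : ℝ → ℝ × ℝ → ℝ) (c 𝒯 : ℝ → ℝ × ℝ → ℝ)
    (hut : ∀ t ∈ Icc (0:ℝ) T, ∀ p ∈ Ici (0:ℝ) ×ˢ Ici (0:ℝ),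
      HasDerivAt (fun s => u s p) (ut t p) t)
    (hux : ∀ t ∈ Icc (0:ℝ) T, ∀ p ∈ Ici (0:ℝ) ×ˢ Ici (0:ℝ),
      HasDerivAt (fun x => u t (x, p.2)) (ux t p) p.1)
    (huy : ∀ t ∈ Icc (0:ℝ) T, ∀ p ∈ Ici (0:ℝ) ×ˢ Ici (0:ℝ),
      HasDerivAt (fun y => u t (p.1, y)) (uy t p) p.2)
    (hu_cont : ContinuousOn (fun q : ℝ × (ℝ × ℝ) => u q.1 q.2) (Icc 0 T ×ˢ (Ici 0 ×ˢ Ici 0)))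
    (hut_cont : ContinuousOn (fun q : ℝ × (ℝ × ℝ) => ut q.1 q.2) (Icc 0 T ×ˢ (Ici 0 ×ˢ Ici 0)))
    (hux_cont : ContinuousOn (fun q : ℝ × (ℝ × ℝ) => ux q.1 q.2) (Icc 0 T ×ˢ (Ici 0 ×ˢ Ici 0)))
    (huy_cont : ContinuousOn (fun q : ℝ × (ℝ × ℝ) => uy q.1 q.2) (Icc 0 T ×ˢ (Ici 0 ×ˢ Ici 0)))
    (hc_cont : ContinuousOn (fun q : ℝ × (ℝ × ℝ) => c q.1 q.2) (Icc 0 T ×ˢ (Ici 0 ×ˢ Ici 0)))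
    (h𝒯_cont : ContinuousOn (fun q : ℝ × (ℝ × ℝ) => 𝒯 q.1 q.2) (Icc 0 T ×ˢ (Ici 0 ×ˢ Ici 0)))
    (hpde : ∀ t ∈ Icc (0:ℝ) T, ∀ p ∈ Ici (0:ℝ) ×ˢ Ici (0:ℝ),
      ut t p + ux t p + uy t p + c t p * u t p = 𝒯 t p)
    (a₁ b₁ a₂ b₂ : ℝ) (ha₁ : 0 ≤ a₁) (ha₂ : 0 ≤ a₂)
    (φ : ℝ × ℝ → ℝ) (hφc : Continuous φ) (hφ : ∀ x y s : ℝ, φ (x + s, y + s) = φ (x, y) + s)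
    (t : ℝ) (ht : t ∈ Ioo 0 T) :
    HasDerivAt (fun s => ∫ p in Icc (s + a₁) (s + b₁) ×ˢ Icc (s + a₂) (s + b₂), φ p * u s p)
      ((∫ p in Icc (t + a₁) (t + b₁) ×ˢ Icc (t + a₂) (t + b₂), φ p * (𝒯 t p - c t p * u t p))
        + ∫ p in Icc (t + a₁) (t + b₁) ×ˢ Icc (t + a₂) (t + b₂), u t p) t := by
  obtain ⟨ht0, htT⟩ := ht
  have hKc : IsCompact (Icc a₁ b₁ ×ˢ Icc a₂ b₂) := isCompact_Icc.prod isCompact_Icc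
  have hKm : MeasurableSet (Icc a₁ b₁ ×ˢ Icc a₂ b₂) := hKc.measurableSet
  set ε := min t (T - t) / 2 with hεdef
  have hm1 : min t (T - t) ≤ t := min_le_left _ _
  have hm2 : min t (T - t) ≤ T - t := min_le_right _ _
  have hε0 : 0 < ε := by
    have : 0 < min t (T - t) := lt_min ht0 (by linarith)
    rw [hεdef]; linarith
  have hball : ∀ s ∈ Metric.ball t ε, s ∈ Icc (t - ε) (t + ε) := by
    intro s hs
    rw [Metric.mem_ball, Real.dist_eq] at hs
    rcases abs_lt.1 hs with ⟨hl, hr⟩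
    exact ⟨by linarith, by linarith⟩
  have hIcc_pos : ∀ s ∈ Icc (t - ε) (t + ε), 0 < s ∧ s < T := by
    intro s ⟨hl, hr⟩
    constructor <;> [linarith; linarith]
  -- points of the moving rectangle stay inside the region
  have hmapsJ : ∀ s (q : ℝ × ℝ), s ∈ Icc (t - ε) (t + ε) → q ∈ Icc a₁ b₁ ×ˢ Icc a₂ b₂ →
      ((s, (q.1 + s, q.2 + s)) : ℝ × (ℝ × ℝ)) ∈ Icc 0 T ×ˢ (Ici 0 ×ˢ Ici 0) := by
    rintro s q hs ⟨⟨hq1, _⟩, ⟨hq2, _⟩⟩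
    obtain ⟨hs0, hsT⟩ := hIcc_pos s hs
    exact ⟨⟨le_of_lt hs0, le_of_lt hsT⟩, by simp only [mem_prod, mem_Ici]; constructor <;> linarith⟩
  -- continuity of time-slices
  have hcomp : ∀ g : ℝ → ℝ × ℝ → ℝ,
      ContinuousOn (fun q : ℝ × (ℝ × ℝ) => g q.1 q.2) (Icc 0 T ×ˢ (Ici 0 ×ˢ Ici 0)) →
      ∀ s ∈ Icc (t - ε) (t + ε),
        ContinuousOn (fun q : ℝ × ℝ => g s (q.1 + s, q.2 + s)) (Icc a₁ b₁ ×ˢ Icc a₂ b₂) := by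
    intro g hg s hs
    have hc2 : Continuous (fun q : ℝ × ℝ => ((s, (q.1 + s, q.2 + s)) : ℝ × (ℝ × ℝ))) := by
      fun_prop
    exact hg.comp hc2.continuousOn (fun q hq => hmapsJ s q hs hq)
  -- joint continuity on the compact cylinder
  have hcompJ : ∀ g : ℝ → ℝ × ℝ → ℝ,
      ContinuousOn (fun q : ℝ × (ℝ × ℝ) => g q.1 q.2) (Icc 0 T ×ˢ (Ici 0 ×ˢ Ici 0)) →
      ContinuousOn (fun sq : ℝ × (ℝ × ℝ) => g sq.1 (sq.2.1 + sq.1, sq.2.2 + sq.1))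
        (Icc (t - ε) (t + ε) ×ˢ (Icc a₁ b₁ ×ˢ Icc a₂ b₂)) := by
    intro g hg
    have hc2 : Continuous (fun sq : ℝ × (ℝ × ℝ) =>
        ((sq.1, (sq.2.1 + sq.1, sq.2.2 + sq.1)) : ℝ × (ℝ × ℝ))) := by fun_prop
    exact hg.comp hc2.continuousOn (fun sq hsq => hmapsJ sq.1 sq.2 hsq.1 hsq.2)
  -- slice continuity of F and F'
  have hFcont : ∀ s ∈ Icc (t - ε) (t + ε),
      ContinuousOn (fun q : ℝ × ℝ => (φ q + s) * u s (q.1 + s, q.2 + s))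
        (Icc a₁ b₁ ×ˢ Icc a₂ b₂) :=
    fun s hs => ((hφc.add continuous_const).continuousOn).mul (hcomp u hu_cont s hs)
  have hF'cont : ∀ s ∈ Icc (t - ε) (t + ε),
      ContinuousOn (fun q : ℝ × ℝ => u s (q.1 + s, q.2 + s)
        + (φ q + s) * (𝒯 s (q.1 + s, q.2 + s) - c s (q.1 + s, q.2 + s) * u s (q.1 + s, q.2 + s)))
        (Icc a₁ b₁ ×ˢ Icc a₂ b₂) :=
    fun s hs => (hcomp u hu_cont s hs).add
      (((hφc.add continuous_const).continuousOn).mul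
        ((hcomp 𝒯 h𝒯_cont s hs).sub ((hcomp c hc_cont s hs).mul (hcomp u hu_cont s hs))))
  -- joint continuity of F' and uniform bound
  have hF'contJ : ContinuousOn (fun sq : ℝ × (ℝ × ℝ) => u sq.1 (sq.2.1 + sq.1, sq.2.2 + sq.1)
      + (φ sq.2 + sq.1) * (𝒯 sq.1 (sq.2.1 + sq.1, sq.2.2 + sq.1)
        - c sq.1 (sq.2.1 + sq.1, sq.2.2 + sq.1) * u sq.1 (sq.2.1 + sq.1, sq.2.2 + sq.1)))
      (Icc (t - ε) (t + ε) ×ˢ (Icc a₁ b₁ ×ˢ Icc a₂ b₂)) :=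
    (hcompJ u hu_cont).add
      ((((hφc.comp continuous_snd).add continuous_fst).continuousOn).mul
        ((hcompJ 𝒯 h𝒯_cont).sub ((hcompJ c hc_cont).mul (hcompJ u hu_cont))))
  obtain ⟨M, hM⟩ := (isCompact_Icc.prod hKc).exists_bound_of_continuousOn hF'contJ
  -- differentiation under the integral
  have main := hasDerivAt_integral_of_dominated_loc_of_deriv_le
    (μ := volume.restrict (Icc a₁ b₁ ×ˢ Icc a₂ b₂)) (x₀ := t)
    (F := fun s q => (φ q + s) * u s (q.1 + s, q.2 + s))
    (F' := fun s q => u s (q.1 + s, q.2 + s)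
      + (φ q + s) * (𝒯 s (q.1 + s, q.2 + s) - c s (q.1 + s, q.2 + s) * u s (q.1 + s, q.2 + s)))
    (bound := fun _ => M) (Metric.ball_mem_nhds t hε0)
    ?_ ?_ ?_ ?_ ?_ ?_
  · -- use main.2 after rewriting
    have htI : t ∈ Icc (t - ε) (t + ε) := ⟨by linarith, by linarith⟩
    have hfun : (fun s => ∫ p in Icc (s + a₁) (s + b₁) ×ˢ Icc (s + a₂) (s + b₂), φ p * u s p)
        = fun s => ∫ q in Icc a₁ b₁ ×ˢ Icc a₂ b₂, (φ q + s) * u s (q.1 + s, q.2 + s) := by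
      funext s
      rw [shift_integral (fun p => φ p * u s p) s a₁ b₁ a₂ b₂]
      congr 1
      funext q
      show φ (q.1 + s, q.2 + s) * u s (q.1 + s, q.2 + s) = (φ q + s) * u s (q.1 + s, q.2 + s)
      rw [hφ, Prod.mk.eta]
    have i1 : Integrable (fun q : ℝ × ℝ => u t (q.1 + t, q.2 + t))
        (volume.restrict (Icc a₁ b₁ ×ˢ Icc a₂ b₂)) :=
      (hcomp u hu_cont t htI).integrableOn_compact hKc
    have i2 : Integrable (fun q : ℝ × ℝ => (φ q + t) * (𝒯 t (q.1 + t, q.2 + t)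
        - c t (q.1 + t, q.2 + t) * u t (q.1 + t, q.2 + t)))
        (volume.restrict (Icc a₁ b₁ ×ˢ Icc a₂ b₂)) :=
      (((hφc.add continuous_const).continuousOn).mul
        ((hcomp 𝒯 h𝒯_cont t htI).sub
          ((hcomp c hc_cont t htI).mul (hcomp u hu_cont t htI)))).integrableOn_compact hKc
    have hval1 : (∫ p in Icc (t + a₁) (t + b₁) ×ˢ Icc (t + a₂) (t + b₂), u t p)
        = ∫ q in Icc a₁ b₁ ×ˢ Icc a₂ b₂, u t (q.1 + t, q.2 + t) :=
      shift_integral (fun p => u t p) t a₁ b₁ a₂ b₂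
    have hval2 : (∫ p in Icc (t + a₁) (t + b₁) ×ˢ Icc (t + a₂) (t + b₂),
          φ p * (𝒯 t p - c t p * u t p))
        = ∫ q in Icc a₁ b₁ ×ˢ Icc a₂ b₂, (φ q + t) * (𝒯 t (q.1 + t, q.2 + t)
            - c t (q.1 + t, q.2 + t) * u t (q.1 + t, q.2 + t)) := by
      rw [shift_integral (fun p => φ p * (𝒯 t p - c t p * u t p)) t a₁ b₁ a₂ b₂]
      congr 1
      funext q
      show φ (q.1 + t, q.2 + t) * _ = (φ q + t) * _
      rw [hφ, Prod.mk.eta]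
    have hvalue : (∫ q in Icc a₁ b₁ ×ˢ Icc a₂ b₂, (u t (q.1 + t, q.2 + t)
          + (φ q + t) * (𝒯 t (q.1 + t, q.2 + t)
            - c t (q.1 + t, q.2 + t) * u t (q.1 + t, q.2 + t))))
        = (∫ q in Icc a₁ b₁ ×ˢ Icc a₂ b₂, (φ q + t) * (𝒯 t (q.1 + t, q.2 + t)
            - c t (q.1 + t, q.2 + t) * u t (q.1 + t, q.2 + t)))
          + ∫ q in Icc a₁ b₁ ×ˢ Icc a₂ b₂, u t (q.1 + t, q.2 + t) := by
      rw [integral_add i1 i2]; ring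
    rw [hfun, hval1, hval2, ← hvalue]
    exact main.2
  · -- hF_meas
    filter_upwards [Metric.ball_mem_nhds t hε0] with s hs
    exact (hFcont s (hball s hs)).aestronglyMeasurable hKm
  · -- hF_int
    exact (hFcont t (by constructor <;> linarith)).integrableOn_compact hKc
  · -- hF'_meas
    exact (hF'cont t (by constructor <;> linarith)).aestronglyMeasurable hKm
  · -- h_bound
    filter_upwards [ae_restrict_mem hKm] with q hq
    intro s hs
    have := hM (s, q) ⟨hball s hs, hq⟩
    simpa using this
  · -- bound integrable
    exact integrableOn_const (hKc.measure_lt_top.ne)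
  · -- h_diff
    filter_upwards [ae_restrict_mem hKm] with q hq
    intro s hs
    have hsI := hball s hs
    obtain ⟨hs0, hsT⟩ := hIcc_pos s hsI
    have hsIcc : s ∈ Icc (0:ℝ) T := ⟨le_of_lt hs0, le_of_lt hsT⟩
    obtain ⟨⟨hq1, _⟩, ⟨hq2, _⟩⟩ := hq
    have hVo : IsOpen (Ioo (0:ℝ) T ×ˢ (Ioi (0:ℝ) ×ˢ Ioi (0:ℝ))) :=
      isOpen_Ioo.prod (isOpen_Ioi.prod isOpen_Ioi)
    have hpt : ((s, (q.1 + s, q.2 + s)) : ℝ × (ℝ × ℝ)) ∈ Ioo (0:ℝ) T ×ˢ (Ioi (0:ℝ) ×ˢ Ioi (0:ℝ)) :=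
      ⟨⟨hs0, hsT⟩, ⟨by simp only [mem_Ioi]; linarith, by simp only [mem_Ioi]; linarith⟩⟩
    have hVsub : (Ioo (0:ℝ) T ×ˢ (Ioi (0:ℝ) ×ˢ Ioi (0:ℝ))) ⊆ Icc 0 T ×ˢ (Ici 0 ×ˢ Ici 0) :=
      Set.prod_mono Ioo_subset_Icc_self (Set.prod_mono Ioi_subset_Ici_self Ioi_subset_Ici_self)
    have hnb : Icc (0:ℝ) T ×ˢ (Ici (0:ℝ) ×ˢ Ici (0:ℝ)) ∈ nhds ((s, (q.1 + s, q.2 + s)) : ℝ × (ℝ × ℝ)) :=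
      Filter.mem_of_superset (hVo.mem_nhds hpt) hVsub
    have hchain := chain_line u ut ux uy q.1 q.2 s (Ioo (0:ℝ) T ×ˢ (Ioi (0:ℝ) ×ˢ Ioi (0:ℝ)))
      (hVo.mem_nhds hpt)
      (fun r hr => hut r.1 (Ioo_subset_Icc_self hr.1) r.2 (hVsub hr).2)
      (fun r hr => hux r.1 (Ioo_subset_Icc_self hr.1) r.2 (hVsub hr).2)
      (fun r hr => huy r.1 (Ioo_subset_Icc_self hr.1) r.2 (hVsub hr).2)
      (hut_cont.continuousAt hnb) (hux_cont.continuousAt hnb) (huy_cont.continuousAt hnb)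
    have hlin : HasDerivAt (fun σ => φ q + σ) 1 s := (hasDerivAt_id s).const_add (φ q)
    have hprod := hlin.mul hchain
    have hmemR : ((q.1 + s, q.2 + s) : ℝ × ℝ) ∈ Ici (0:ℝ) ×ˢ Ici (0:ℝ) :=
      ⟨by simp only [mem_Ici]; linarith, by simp only [mem_Ici]; linarith⟩
    have hsum : ut s (q.1 + s, q.2 + s) + ux s (q.1 + s, q.2 + s) + uy s (q.1 + s, q.2 + s)
        = 𝒯 s (q.1 + s, q.2 + s) - c s (q.1 + s, q.2 + s) * u s (q.1 + s, q.2 + s) := by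
      have := hpde s hsIcc (q.1 + s, q.2 + s) hmemR
      linarith
    rw [hsum, one_mul] at hprod
    exact hprod

/-- For a nonnegative `C¹` solution of the couples equation
`∂ₜu꜀ + ∂ₓu꜀ + ∂_y u꜀ + c꜀ u꜀ = 𝒯`, the first-moment vector of a rectangular
cohort moving with unit speed satisfies
`(d/dt)(x̄꜀ᵢⱼ, ȳ꜀ᵢⱼ)(t) = ∬_{Ω꜀ᵢⱼ(t)} (x,y) (𝒯 − c꜀ u꜀) dx dy + (1,1) m꜀ᵢⱼ(t)`. -/
theorem ebt_couple_cohort_first_moment_derivative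
    (T : ℝ) (hT : 0 < T)
    (u ut ux uy : ℝ → ℝ × ℝ → ℝ) (c 𝒯 : ℝ → ℝ × ℝ → ℝ)
    (hu_nonneg : ∀ t ∈ Icc (0:ℝ) T, ∀ p ∈ Ici (0:ℝ) ×ˢ Ici (0:ℝ), 0 ≤ u t p)
    (hut : ∀ t ∈ Icc (0:ℝ) T, ∀ p ∈ Ici (0:ℝ) ×ˢ Ici (0:ℝ),
      HasDerivAt (fun s => u s p) (ut t p) t)
    (hux : ∀ t ∈ Icc (0:ℝ) T, ∀ p ∈ Ici (0:ℝ) ×ˢ Ici (0:ℝ),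
      HasDerivAt (fun x => u t (x, p.2)) (ux t p) p.1)
    (huy : ∀ t ∈ Icc (0:ℝ) T, ∀ p ∈ Ici (0:ℝ) ×ˢ Ici (0:ℝ),
      HasDerivAt (fun y => u t (p.1, y)) (uy t p) p.2)
    (hu_cont : ContinuousOn (fun q : ℝ × (ℝ × ℝ) => u q.1 q.2) (Icc 0 T ×ˢ (Ici 0 ×ˢ Ici 0)))
    (hut_cont : ContinuousOn (fun q : ℝ × (ℝ × ℝ) => ut q.1 q.2) (Icc 0 T ×ˢ (Ici 0 ×ˢ Ici 0)))
    (hux_cont : ContinuousOn (fun q : ℝ × (ℝ × ℝ) => ux q.1 q.2) (Icc 0 T ×ˢ (Ici 0 ×ˢ Ici 0)))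
    (huy_cont : ContinuousOn (fun q : ℝ × (ℝ × ℝ) => uy q.1 q.2) (Icc 0 T ×ˢ (Ici 0 ×ˢ Ici 0)))
    (hc_cont : ContinuousOn (fun q : ℝ × (ℝ × ℝ) => c q.1 q.2) (Icc 0 T ×ˢ (Ici 0 ×ˢ Ici 0)))
    (h𝒯_cont : ContinuousOn (fun q : ℝ × (ℝ × ℝ) => 𝒯 q.1 q.2) (Icc 0 T ×ˢ (Ici 0 ×ˢ Ici 0)))
    (hpde : ∀ t ∈ Icc (0:ℝ) T, ∀ p ∈ Ici (0:ℝ) ×ˢ Ici (0:ℝ),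
      ut t p + ux t p + uy t p + c t p * u t p = 𝒯 t p)
    (a₁ b₁ a₂ b₂ : ℝ) (ha₁ : 0 ≤ a₁) (h₁ : a₁ < b₁) (ha₂ : 0 ≤ a₂) (h₂ : a₂ < b₂)
    (mc xbar ybar : ℝ → ℝ)
    (hmc : ∀ s, mc s = ∫ p in Icc (s + a₁) (s + b₁) ×ˢ Icc (s + a₂) (s + b₂), u s p)
    (hxbar : ∀ s, xbar s = ∫ p in Icc (s + a₁) (s + b₁) ×ˢ Icc (s + a₂) (s + b₂), p.1 * u s p)
    (hybar : ∀ s, ybar s = ∫ p in Icc (s + a₁) (s + b₁) ×ˢ Icc (s + a₂) (s + b₂), p.2 * u s p) :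
    ∀ t ∈ Ioo (0:ℝ) T,
      HasDerivAt xbar
        ((∫ p in Icc (t + a₁) (t + b₁) ×ˢ Icc (t + a₂) (t + b₂),
            p.1 * (𝒯 t p - c t p * u t p)) + mc t) t ∧
      HasDerivAt ybar
        ((∫ p in Icc (t + a₁) (t + b₁) ×ˢ Icc (t + a₂) (t + b₂),
            p.2 * (𝒯 t p - c t p * u t p)) + mc t) t := by
  intro t ht
  have hx : xbar = fun s => ∫ p in Icc (s + a₁) (s + b₁) ×ˢ Icc (s + a₂) (s + b₂), p.1 * u s p :=
    funext hxbar
  have hy : ybar = fun s => ∫ p in Icc (s + a₁) (s + b₁) ×ˢ Icc (s + a₂) (s + b₂), p.2 * u s p :=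
    funext hybar
  constructor
  · rw [hx, hmc]
    exact moment_deriv T u ut ux uy c 𝒯 hut hux huy hu_cont hut_cont hux_cont huy_cont
      hc_cont h𝒯_cont hpde a₁ b₁ a₂ b₂ ha₁ ha₂ Prod.fst continuous_fst (fun x y s => rfl) t ht
  · rw [hy, hmc]
    exact moment_deriv T u ut ux uy c 𝒯 hut hux huy hu_cont hut_cont hux_cont huy_cont
      hc_cont h𝒯_cont hpde a₁ b₁ a₂ b₂ ha₁ ha₂ Prod.snd continuous_snd (fun x y s => rfl) t ht
end

section
/- Let u ∈ C¹([0,T]×ℝ₊) be nonnegative and satisfy ∂_t u + ∂_x u + c u = 0, where c(t,·) ∈ C²(ℝ₊) with |∂²_x c(t,x)| ≤ K for all t,x. Let Ω_i(t) = [l_{i−1}(t), l_i(t)) be a cohort with l(t) = t + l(0) and 0 ≤ l_{i−1}(0) < l_i(0), with mass m_i(t) := ∫_{Ω_i(t)} u(t,x) dx > 0 and location x_i(t) := (1/m_i(t))∫_{Ω_i(t)} x u(t,x) dx. Then for every t: |(d/dt) m_i(t) + c(t, x_i(t)) m_i(t)| ≤ (K/2) · ‖u(t,·)‖_{L¹(Ω_i(t))}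 · max_{x∈Ω_i(t)} |x − x_i(t)|². -/
open MeasureTheory Set intervalIntegral

private lemma abs_sub_left_of_mem_uIcc' {p q z : ℝ} (h : z ∈ Set.uIcc p q) :
    |z - p| ≤ |q - p| := by
  rcases le_total p q with h' | h'
  · rw [Set.uIcc_of_le h'] at h
    rw [abs_of_nonneg (by linarith [h.1]), abs_of_nonneg (by linarith)]
    linarith [h.2]
  · rw [Set.uIcc_of_ge h'] at h
    rw [abs_of_nonpos (by linarith [h.2]), abs_of_nonpos (by linarith)]
    linarith [h.1]

private lemma quad_bound' {g : ℝ → ℝ} {K x₀ x : ℝ}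
    (hg : ContinuousOn g (Set.uIcc x₀ x))
    (hb : ∀ z ∈ Set.uIcc x₀ x, |g z| ≤ K * |z - x₀|) :
    |∫ z in x₀..x, g z| ≤ K / 2 * (x - x₀) ^ 2 := by
  rcases le_total x₀ x with h | h
  · have hi' : IntervalIntegrable (fun z => |g z|) volume x₀ x := hg.abs.intervalIntegrable
    have hmodel : (∫ z in x₀..x, K * (z - x₀)) = K / 2 * (x - x₀) ^ 2 := by
      have hd : ∀ z ∈ Set.uIcc x₀ x, HasDerivAt (fun w => K / 2 * (w - x₀) ^ 2) (K * (z - x₀)) z := by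
        intro z _
        have := (((hasDerivAt_id z).sub_const x₀).pow 2).const_mul (K / 2)
        have this : HasDerivAt (fun w => K / 2 * (w - x₀) ^ 2) _ z := this
        convert this using 1
        simp only [id_eq]
        ring
      rw [intervalIntegral.integral_eq_sub_of_hasDerivAt hd
        (by apply Continuous.intervalIntegrable; continuity)]
      ring
    calc |∫ z in x₀..x, g z| ≤ ∫ z in x₀..x, |g z| :=
          intervalIntegral.abs_integral_le_integral_abs h
      _ ≤ ∫ z in x₀..x, K * (z - x₀) := by
          apply intervalIntegral.integral_mono_on h hi'
            (by apply Continuous.intervalIntegrable; continuity)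
          intro z hz
          have hzz := hb z (by rw [Set.uIcc_of_le h]; exact hz)
          rwa [abs_of_nonneg (sub_nonneg.2 hz.1)] at hzz
      _ = K / 2 * (x - x₀) ^ 2 := hmodel
  · have hg' : ContinuousOn g (Set.uIcc x x₀) := by rwa [Set.uIcc_comm]
    have hi' : IntervalIntegrable (fun z => |g z|) volume x x₀ := hg'.abs.intervalIntegrable
    rw [intervalIntegral.integral_symm, abs_neg]
    have hmodel : (∫ z in x..x₀, K * (x₀ - z)) = K / 2 * (x - x₀) ^ 2 := by
      have hd : ∀ z ∈ Set.uIcc x x₀, HasDerivAt (fun w => -(K / 2) * (x₀ - w) ^ 2) (K * (x₀ - z)) z := by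
        intro z _
        have := (((hasDerivAt_id z).const_sub x₀).pow 2).const_mul (-(K / 2))
        have this : HasDerivAt (fun w => -(K / 2) * (x₀ - w) ^ 2) _ z := this
        convert this using 1
        simp only [id_eq]
        ring
      rw [intervalIntegral.integral_eq_sub_of_hasDerivAt hd
        (by apply Continuous.intervalIntegrable; continuity)]
      ring
    calc |∫ z in x..x₀, g z| ≤ ∫ z in x..x₀, |g z| :=
          intervalIntegral.abs_integral_le_integral_abs h
      _ ≤ ∫ z in x..x₀, K * (x₀ - z) := by
          apply intervalIntegral.integral_mono_on h hi'
            (by apply Continuous.intervalIntegrable; continuity)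
          intro z hz
          have hzz := hb z (by rw [Set.uIcc_comm, Set.uIcc_of_le h]; exact hz)
          have h2 : |z - x₀| = x₀ - z := by
            rw [abs_sub_comm, abs_of_nonneg (by linarith [hz.2])]
          rw [h2] at hzz
          exact hzz
      _ = K / 2 * (x - x₀) ^ 2 := hmodel

/-- The closed-form EBT mass equation `d/dt mᵢ = −c(t,xᵢ)mᵢ`
holds with a second-order error in the cohort diameter:
`|(d/dt) mᵢ(t) + c(t,xᵢ(t)) mᵢ(t)| ≤ (K/2) ‖u(t,·)‖_{L¹(Ωᵢ(t))} max_{Ωᵢ(t)}|x−xᵢ(t)|²`. -/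
theorem ebt_closed_form_mass_equation_error
    (T : ℝ) (hT : 0 < T)
    (u ut ux : ℝ → ℝ → ℝ) (c cx cxx : ℝ → ℝ → ℝ) (K : ℝ)
    (hu_nonneg : ∀ t ∈ Icc (0:ℝ) T, ∀ x ∈ Ici (0:ℝ), 0 ≤ u t x)
    (hut : ∀ t ∈ Icc (0:ℝ) T, ∀ x ∈ Ici (0:ℝ), HasDerivAt (fun s => u s x) (ut t x) t)
    (hux : ∀ t ∈ Icc (0:ℝ) T, ∀ x ∈ Ici (0:ℝ), HasDerivAt (fun y => u t y) (ux t x) x)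
    (hu_cont : ContinuousOn (fun p : ℝ × ℝ => u p.1 p.2) (Icc 0 T ×ˢ Ici 0))
    (hut_cont : ContinuousOn (fun p : ℝ × ℝ => ut p.1 p.2) (Icc 0 T ×ˢ Ici 0))
    (hux_cont : ContinuousOn (fun p : ℝ × ℝ => ux p.1 p.2) (Icc 0 T ×ˢ Ici 0))
    (hc_cont : ContinuousOn (fun p : ℝ × ℝ => c p.1 p.2) (Icc 0 T ×ˢ Ici 0))
    (hcx : ∀ t ∈ Icc (0:ℝ) T, ∀ x ∈ Ici (0:ℝ), HasDerivAt (c t) (cx t x) x)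
    (hcxx : ∀ t ∈ Icc (0:ℝ) T, ∀ x ∈ Ici (0:ℝ), HasDerivAt (cx t) (cxx t x) x)
    (hcxx_cont : ∀ t ∈ Icc (0:ℝ) T, ContinuousOn (cxx t) (Ici 0))
    (hK : ∀ t ∈ Icc (0:ℝ) T, ∀ x ∈ Ici (0:ℝ), |cxx t x| ≤ K)
    (hpde : ∀ t ∈ Icc (0:ℝ) T, ∀ x ∈ Ici (0:ℝ), ut t x + ux t x + c t x * u t x = 0)
    (l₀ l₁ : ℝ) (hl₀ : 0 ≤ l₀) (hl : l₀ < l₁)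
    (mi xi : ℝ → ℝ)
    (hmi : ∀ s, mi s = ∫ x in (s + l₀)..(s + l₁), u s x)
    (hmi_pos : ∀ t ∈ Icc (0:ℝ) T, 0 < mi t)
    (hxi : ∀ s, xi s = (1 / mi s) * ∫ x in (s + l₀)..(s + l₁), x * u s x) :
    ∀ t ∈ Ioo (0:ℝ) T,
      |deriv mi t + c t (xi t) * mi t| ≤
        (K / 2) * (∫ x in (t + l₀)..(t + l₁), |u t x|) *
          (⨆ x ∈ Icc (t + l₀) (t + l₁), |x - xi t| ^ 2) := by
  -- a slicing helper
  have slice : ∀ v : ℝ → ℝ → ℝ, ContinuousOn (fun q : ℝ × ℝ => v q.1 q.2) (Icc 0 T ×ˢ Ici 0) →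
      ∀ r ∈ Icc (0:ℝ) T, ContinuousOn (v r) (Ici 0) := by
    intro v hv r hr
    have h2 : ContinuousOn ((fun q : ℝ × ℝ => v q.1 q.2) ∘ (fun z : ℝ => (r, z))) (Ici 0) :=
      hv.comp (Continuous.continuousOn (continuous_const.prodMk continuous_id))
        (fun z hz => ⟨hr, hz⟩)
    exact h2
  have slice2 : ∀ v : ℝ → ℝ → ℝ, ContinuousOn (fun q : ℝ × ℝ => v q.1 q.2) (Icc 0 T ×ˢ Ici 0) →
      ∀ (s : ℝ) (A : Set ℝ), s ∈ Icc (0:ℝ) T → (∀ y ∈ A, 0 ≤ y + s) →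
      ContinuousOn (fun y => v s (y + s)) A := by
    intro v hv s A hs hA
    have h2 : ContinuousOn ((fun q : ℝ × ℝ => v q.1 q.2) ∘ (fun y : ℝ => (s, y + s))) A :=
      hv.comp (Continuous.continuousOn
        (continuous_const.prodMk (continuous_id.add continuous_const)))
        (fun y hy => ⟨hs, hA y hy⟩)
    exact h2
  intro t ht
  obtain ⟨ht0, htT⟩ := ht
  have htI : t ∈ Icc (0:ℝ) T := ⟨ht0.le, htT.le⟩
  have hab : t + l₀ < t + l₁ := by linarith
  have ha0 : 0 < t + l₀ := by linarith
  set a := t + l₀ with ha_def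
  set b := t + l₁ with hb_def
  set ξ := xi t with hξ_def
  obtain ⟨ε, hε, hεt, hεT⟩ : ∃ ε > (0:ℝ), ε < t ∧ ε < T - t :=
    ⟨min t (T - t) / 2, by have h1 : (0:ℝ) < min t (T - t) := lt_min ht0 (by linarith); linarith,
      by have := min_le_left t (T - t); linarith,
      by have := min_le_right t (T - t); linarith⟩
  have hball : ∀ s ∈ Metric.ball t ε, 0 < s ∧ s < T := by
    intro s hs
    rw [Metric.mem_ball, Real.dist_eq] at hs
    have := abs_lt.mp hs
    constructor <;> linarith [this.1, this.2]
  -- Step A: derivative of the mass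
  have hmain : HasDerivAt mi (∫ y in l₀..l₁, (ut t (y + t) + ux t (y + t))) t := by
    have heq : mi = fun s => ∫ y in l₀..l₁, u s (y + s) := by
      funext s
      rw [hmi s, intervalIntegral.integral_comp_add_right (u s) s]
      simp [add_comm]
    rw [heq]
    -- dominating bound from compactness
    have hKsub : Icc (t - ε) (t + ε) ×ˢ Icc (0:ℝ) (t + ε + l₁) ⊆ Icc 0 T ×ˢ Ici 0 := by
      rintro ⟨p, q⟩ ⟨hp, hq⟩
      exact ⟨⟨by linarith [hp.1], by linarith [hp.2]⟩, hq.1⟩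
    have hKcomp : IsCompact (Icc (t - ε) (t + ε) ×ˢ Icc (0:ℝ) (t + ε + l₁)) :=
      isCompact_Icc.prod isCompact_Icc
    obtain ⟨C₁, hC₁⟩ := hKcomp.exists_bound_of_continuousOn (hut_cont.mono hKsub)
    obtain ⟨C₂, hC₂⟩ := hKcomp.exists_bound_of_continuousOn (hux_cont.mono hKsub)
    refine (intervalIntegral.hasDerivAt_integral_of_dominated_loc_of_deriv_le
      (F := fun s y => u s (y + s)) (F' := fun s y => ut s (y + s) + ux s (y + s))
      (bound := fun _ => C₁ + C₂) (Metric.ball_mem_nhds t hε) ?_ ?_ ?_ ?_ ?_ ?_).2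
    · -- measurability nearby
      filter_upwards [Metric.ball_mem_nhds t hε] with s hs
      obtain ⟨hs0, hsT⟩ := hball s hs
      have hc : ContinuousOn (fun y => u s (y + s)) (Set.uIoc l₀ l₁) := by
        apply slice2 u hu_cont s _ ⟨hs0.le, hsT.le⟩
        intro y hy
        rw [uIoc_of_le hl.le] at hy
        linarith [hy.1]
      exact hc.aestronglyMeasurable measurableSet_uIoc
    · -- integrability at t
      apply ContinuousOn.intervalIntegrable
      apply slice2 u hu_cont t _ htI
      intro y hy
      rw [uIcc_of_le hl.le] at hy
      linarith [hy.1]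
    · -- measurability of F' t
      have hmaps : ∀ y ∈ Set.uIoc l₀ l₁, (0:ℝ) ≤ y + t := by
        intro y hy
        rw [uIoc_of_le hl.le] at hy
        linarith [hy.1]
      have hc : ContinuousOn (fun y => ut t (y + t) + ux t (y + t)) (Set.uIoc l₀ l₁) :=
        (slice2 ut hut_cont t _ htI hmaps).add (slice2 ux hux_cont t _ htI hmaps)
      exact hc.aestronglyMeasurable measurableSet_uIoc
    · -- uniform bound
      apply ae_of_all
      intro y hy s hs
      rw [uIoc_of_le hl.le] at hy
      rw [Metric.mem_ball, Real.dist_eq] at hs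
      have habs := abs_lt.mp hs
      have hmem : ((s, y + s) : ℝ × ℝ) ∈ Icc (t - ε) (t + ε) ×ˢ Icc (0:ℝ) (t + ε + l₁) := by
        simp only [Set.mem_prod, Set.mem_Icc]
        refine ⟨⟨by linarith [habs.1], by linarith [habs.2]⟩,
          ⟨by linarith [hy.1, habs.1], by linarith [hy.2, habs.2]⟩⟩
      calc ‖ut s (y + s) + ux s (y + s)‖ ≤ ‖ut s (y + s)‖ + ‖ux s (y + s)‖ := norm_add_le _ _
        _ ≤ C₁ + C₂ := add_le_add (hC₁ _ hmem) (hC₂ _ hmem)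
    · exact intervalIntegrable_const
    · -- differentiability of s ↦ u s (y+s)
      apply ae_of_all
      intro y hy s hs
      rw [uIoc_of_le hl.le] at hy
      obtain ⟨hs0, hsT⟩ := hball s hs
      have hp0 : 0 < y + s := by linarith [hy.1]
      -- local FTC representation
      have hrep : (fun r => u r (y + r)) =ᶠ[nhds s]
          (fun r => u r (y + s) + ∫ z in (y + s)..(y + r), ux r z) := by
        filter_upwards [Metric.isOpen_ball.mem_nhds hs] with r hr
        obtain ⟨hr0, hrT⟩ := hball r hr
        have hrI : r ∈ Icc (0:ℝ) T := ⟨hr0.le, hrT.le⟩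
        have hsub : Set.uIcc (y + s) (y + r) ⊆ Ici (0:ℝ) := by
          intro z hz
          have h1 : min (y + s) (y + r) ≤ z := hz.1
          have h2 : (0:ℝ) ≤ min (y + s) (y + r) := le_min hp0.le (by linarith [hy.1])
          exact le_trans h2 h1
        have hftc := intervalIntegral.integral_eq_sub_of_hasDerivAt
          (f := u r) (f' := ux r)
          (fun z hz => hux r hrI z (hsub hz))
          (((slice ux hux_cont r hrI).mono hsub).intervalIntegrable)
        rw [hftc]; ring
      refine HasDerivAt.congr_of_eventuallyEq ?_ hrep
      apply HasDerivAt.add (hut s ⟨hs0.le, hsT.le⟩ (y + s) hp0.le)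
      -- slope argument for the integral term
      rw [hasDerivAt_iff_tendsto_slope, Metric.tendsto_nhdsWithin_nhds]
      intro η hη
      have hcont : ContinuousAt (fun q : ℝ × ℝ => ux q.1 q.2) (s, y + s) := by
        apply hux_cont.continuousAt
        exact prod_mem_nhds (Icc_mem_nhds (by linarith) (by linarith)) (Ici_mem_nhds hp0)
      rw [Metric.continuousAt_iff] at hcont
      obtain ⟨δ, hδ, hδ'⟩ := hcont (η / 2) (by positivity)
      rw [Metric.mem_ball, Real.dist_eq] at hs
      refine ⟨min δ (ε - |s - t|), lt_min hδ (by linarith), ?_⟩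
      intro r hrne hrd
      rw [Real.dist_eq] at hrd
      have hrd1 : |r - s| < δ := lt_of_lt_of_le hrd (min_le_left _ _)
      have hrball : r ∈ Metric.ball t ε := by
        rw [Metric.mem_ball, Real.dist_eq]
        have := lt_of_lt_of_le hrd (min_le_right _ _)
        calc |r - t| ≤ |r - s| + |s - t| := abs_sub_le _ _ _
          _ < ε := by linarith
      obtain ⟨hr0, hrT⟩ := hball r hrball
      have hrI : r ∈ Icc (0:ℝ) T := ⟨hr0.le, hrT.le⟩
      have hrs : r ≠ s := hrne
      have hsub : Set.uIcc (y + s) (y + r) ⊆ Ici (0:ℝ) := by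
        intro z hz
        have h1 : min (y + s) (y + r) ≤ z := hz.1
        have h2 : (0:ℝ) ≤ min (y + s) (y + r) := le_min hp0.le (by linarith [hy.1])
        exact le_trans h2 h1
      have hint : IntervalIntegrable (fun z => ux r z) volume (y + s) (y + r) :=
        ((slice ux hux_cont r hrI).mono hsub).intervalIntegrable
      have key : |(∫ z in (y + s)..(y + r), ux r z) - (r - s) * ux s (y + s)| ≤ η / 2 * |r - s| := by
        have hconst : (r - s) * ux s (y + s) = ∫ _ in (y + s)..(y + r), ux s (y + s) := by
          rw [intervalIntegral.integral_const, smul_eq_mul]; ring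
        rw [hconst, ← intervalIntegral.integral_sub hint intervalIntegrable_const]
        have hbd : ∀ z ∈ Set.uIoc (y + s) (y + r), ‖ux r z - ux s (y + s)‖ ≤ η / 2 := by
          intro z hz
          have hz' : z ∈ Set.uIcc (y + s) (y + r) := Set.Ioc_subset_Icc_self hz
          have hzp : |z - (y + s)| ≤ |(y + r) - (y + s)| := abs_sub_left_of_mem_uIcc' hz'
          have hzp' : |z - (y + s)| < δ := by
            apply lt_of_le_of_lt hzp
            have : (y + r) - (y + s) = r - s := by ring
            rw [this]; exact hrd1
          have hd : dist ((r, z) : ℝ × ℝ) (s, y + s) < δ := by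
            rw [Prod.dist_eq]
            exact max_lt (by rwa [Real.dist_eq]) (by rwa [Real.dist_eq])
          have := hδ' hd
          rw [Real.dist_eq] at this
          exact le_of_lt this
        have := intervalIntegral.norm_integral_le_of_norm_le_const hbd
        have heq2 : |(y + r) - (y + s)| = |r - s| := by congr 1; ring
        rwa [heq2] at this
      rw [Real.dist_eq, slope_def_field]
      simp only [intervalIntegral.integral_same, sub_zero]
      have hrs0 : r - s ≠ 0 := sub_ne_zero.2 hrs
      have : (∫ z in (y + s)..(y + r), ux r z) / (r - s) - ux s (y + s)
          = ((∫ z in (y + s)..(y + r), ux r z) - (r - s) * ux s (y + s)) / (r - s) := by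
        field_simp
      rw [this, abs_div]
      rw [div_lt_iff₀ (abs_pos.2 hrs0)]
      calc |(∫ z in (y + s)..(y + r), ux r z) - (r - s) * ux s (y + s)| ≤ η / 2 * |r - s| := key
        _ < η * |r - s| := by
            have : 0 < |r - s| := abs_pos.2 hrs0
            nlinarith
  -- Step B: deriv mi t = -∫ c u
  have hIccsub : Icc a b ⊆ Ici (0:ℝ) := fun x hx => le_trans ha0.le hx.1
  have hu_c : ContinuousOn (u t) (Ici 0) := slice u hu_cont t htI
  have hc_c : ContinuousOn (c t) (Ici 0) := slice c hc_cont t htI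
  have hcx_c : ContinuousOn (cx t) (Ici 0) :=
    fun x hx => ((hcxx t htI x hx).continuousAt).continuousWithinAt
  have hu' : ContinuousOn (u t) (Icc a b) := hu_c.mono hIccsub
  have hc' : ContinuousOn (c t) (Icc a b) := hc_c.mono hIccsub
  have mkInt : ∀ f : ℝ → ℝ, ContinuousOn f (Icc a b) → IntervalIntegrable f volume a b :=
    fun f hf => (hf.mono (Set.uIcc_of_le hab.le).subset).intervalIntegrable
  have hD2 : (∫ y in l₀..l₁, (ut t (y + t) + ux t (y + t))) = -∫ x in a..b, c t x * u t x := by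
    have h1 : EqOn (fun y => ut t (y + t) + ux t (y + t))
        (fun y => -(c t (y + t) * u t (y + t))) (Set.uIcc l₀ l₁) := by
      intro y hy
      rw [Set.uIcc_of_le hl.le] at hy
      have := hpde t htI (y + t) (by simp only [mem_Ici]; linarith [hy.1])
      simp only
      linarith
    rw [intervalIntegral.integral_congr h1, intervalIntegral.integral_neg,
      intervalIntegral.integral_comp_add_right (fun x => c t x * u t x) t]
    simp [ha_def, hb_def, add_comm]
  have hderiv : deriv mi t = -∫ x in a..b, c t x * u t x := by rw [hmain.deriv, hD2]
  -- centroid facts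
  have hmit_pos := hmi_pos t htI
  have hmi_t : (∫ x in a..b, u t x) = mi t := (hmi t).symm
  have hInt_xu : IntervalIntegrable (fun x => x * u t x) volume a b :=
    mkInt _ (continuous_id.continuousOn.mul hu')
  have hξ_eq : ξ * mi t = ∫ x in a..b, x * u t x := by
    rw [hξ_def, hxi t]
    field_simp
    rfl
  have hξ_mem : ξ ∈ Icc a b := by
    have hlb : a * mi t ≤ ∫ x in a..b, x * u t x := by
      rw [← hmi_t, ← intervalIntegral.integral_const_mul]
      apply intervalIntegral.integral_mono_on hab.le
        (mkInt _ (continuousOn_const.mul hu')) hInt_xu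
      intro x hx
      exact mul_le_mul_of_nonneg_right hx.1 (hu_nonneg t htI x (hIccsub hx))
    have hub : (∫ x in a..b, x * u t x) ≤ b * mi t := by
      rw [← hmi_t, ← intervalIntegral.integral_const_mul]
      apply intervalIntegral.integral_mono_on hab.le hInt_xu
        (mkInt _ (continuousOn_const.mul hu'))
      intro x hx
      exact mul_le_mul_of_nonneg_right hx.2 (hu_nonneg t htI x (hIccsub hx))
    constructor
    · rw [← hξ_eq] at hlb
      exact le_of_mul_le_mul_right hlb hmit_pos
    · rw [← hξ_eq] at hub
      exact le_of_mul_le_mul_right hub hmit_pos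
  -- Taylor estimate
  have hcxlip : ∀ z ∈ Icc a b, |cx t z - cx t ξ| ≤ K * |z - ξ| := by
    intro z hz
    have h1 : Set.uIcc ξ z ⊆ Icc a b := by
      rw [← Set.uIcc_of_le hab.le]
      exact Set.uIcc_subset_uIcc (by rw [Set.uIcc_of_le hab.le]; exact hξ_mem)
        (by rw [Set.uIcc_of_le hab.le]; exact hz)
    have h2 : Set.uIcc ξ z ⊆ Ici (0:ℝ) := fun w hw => hIccsub (h1 hw)
    have hftc : ∫ w in ξ..z, cxx t w = cx t z - cx t ξ :=
      intervalIntegral.integral_eq_sub_of_hasDerivAt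
        (fun w hw => hcxx t htI w (h2 hw))
        (((hcxx_cont t htI).mono h2).intervalIntegrable)
    rw [← hftc]
    have hbd : ∀ w ∈ Set.uIoc ξ z, ‖cxx t w‖ ≤ K :=
      fun w hw => hK t htI w (h2 (Set.uIoc_subset_uIcc hw))
    simpa using intervalIntegral.norm_integral_le_of_norm_le_const hbd
  set R : ℝ → ℝ := fun x => c t x - c t ξ - cx t ξ * (x - ξ) with hR_def
  have hR_cont : ContinuousOn R (Icc a b) := by
    apply ContinuousOn.sub
    · exact hc'.sub continuousOn_const
    · exact continuousOn_const.mul (continuous_id.continuousOn.sub continuousOn_const)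
  have hRbound : ∀ x ∈ Icc a b, |R x| ≤ K / 2 * (x - ξ) ^ 2 := by
    intro x hx
    have h1 : Set.uIcc ξ x ⊆ Icc a b := by
      rw [← Set.uIcc_of_le hab.le]
      exact Set.uIcc_subset_uIcc (by rw [Set.uIcc_of_le hab.le]; exact hξ_mem)
        (by rw [Set.uIcc_of_le hab.le]; exact hx)
    have h2 : Set.uIcc ξ x ⊆ Ici (0:ℝ) := fun w hw => hIccsub (h1 hw)
    have hdg : ∀ z ∈ Set.uIcc ξ x, HasDerivAt (fun w => c t w - c t ξ - cx t ξ * (w - ξ))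
        (cx t z - cx t ξ) z := by
      intro z hz
      have h3 := hcx t htI z (h2 hz)
      have h4 : HasDerivAt (fun w => c t ξ + cx t ξ * (w - ξ)) (cx t ξ) z := by
        simpa using (((hasDerivAt_id z).sub_const ξ).const_mul (cx t ξ)).const_add (c t ξ)
      have h5 := h3.sub h4
      have h6 : HasDerivAt (fun w => c t w - (c t ξ + cx t ξ * (w - ξ))) (cx t z - cx t ξ) z := h5
      simpa [sub_sub] using h6
    have hgc : ContinuousOn (fun z => cx t z - cx t ξ) (Set.uIcc ξ x) :=
      (hcx_c.mono h2).sub continuousOn_const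
    have hftc : ∫ z in ξ..x, (cx t z - cx t ξ) = R x := by
      rw [intervalIntegral.integral_eq_sub_of_hasDerivAt hdg hgc.intervalIntegrable]
      simp only [hR_def]
      ring
    rw [← hftc]
    exact quad_bound' hgc (fun z hz => hcxlip z (h1 hz))
  -- the supremum
  set S := ⨆ x ∈ Icc a b, |x - ξ| ^ 2 with hS_def
  have hble : ∀ x : ℝ, (⨆ _ : x ∈ Icc a b, |x - ξ| ^ 2) ≤ (b - a) ^ 2 := by
    intro x
    by_cases hx : x ∈ Icc a b
    · rw [ciSup_pos hx, sq_abs]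
      exact sq_le_sq' (by linarith [hx.1, hξ_mem.2, hx.2, hξ_mem.1])
        (by linarith [hx.2, hξ_mem.1])
    · haveI : IsEmpty (x ∈ Icc a b) := ⟨hx⟩
      rw [iSup_of_empty', Real.sSup_empty]
      positivity
  have hSbdd : BddAbove (Set.range fun x => ⨆ _ : x ∈ Icc a b, |x - ξ| ^ 2) := by
    refine ⟨(b - a) ^ 2, ?_⟩
    rintro _ ⟨x, rfl⟩
    exact hble x
  have hS_ge : ∀ x ∈ Icc a b, (x - ξ) ^ 2 ≤ S := by
    intro x hx
    have h1 := le_ciSup hSbdd x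
    rw [ciSup_pos hx, sq_abs] at h1
    exact h1
  have hS0 : (0:ℝ) ≤ S := le_trans (sq_nonneg _) (hS_ge a ⟨le_rfl, hab.le⟩)
  have hK0 : (0:ℝ) ≤ K := le_trans (abs_nonneg _) (hK t htI 0 Set.self_mem_Ici)
  -- zero first moment
  have hzero : ∫ x in a..b, (x - ξ) * u t x = 0 := by
    have h1 : ∫ x in a..b, (x - ξ) * u t x
        = (∫ x in a..b, x * u t x) - ∫ x in a..b, ξ * u t x := by
      rw [← intervalIntegral.integral_sub hInt_xu (mkInt (fun x => ξ * u t x) (continuousOn_const.mul hu'))]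
      congr 1
      funext x
      ring
    rw [h1, intervalIntegral.integral_const_mul, hmi_t, ← hξ_eq]
    ring
  -- main identity
  have hE : deriv mi t + c t ξ * mi t = -∫ x in a..b, R x * u t x := by
    have h2 : c t ξ * mi t = ∫ x in a..b, c t ξ * u t x := by
      rw [intervalIntegral.integral_const_mul, hmi_t]
    have h3 : ∫ x in a..b, R x * u t x
        = ((∫ x in a..b, c t x * u t x) - ∫ x in a..b, c t ξ * u t x)
          - cx t ξ * ∫ x in a..b, (x - ξ) * u t x := by
      rw [← intervalIntegral.integral_const_mul,
        ← intervalIntegral.integral_sub (mkInt (fun x => c t x * u t x) (hc'.mul hu'))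
          (mkInt (fun x => c t ξ * u t x) (continuousOn_const.mul hu')),
        ← intervalIntegral.integral_sub
          (mkInt (fun x => c t x * u t x - c t ξ * u t x)
            ((hc'.mul hu').sub (continuousOn_const.mul hu')))
          (mkInt (fun x => cx t ξ * ((x - ξ) * u t x)) (continuousOn_const.mul
            ((continuous_id'.continuousOn.sub continuousOn_const).mul hu')))]
      congr 1
      funext x
      simp only [hR_def]
      ring
    rw [hderiv, h2, h3, hzero]
    ring
  -- final estimate
  calc |deriv mi t + c t ξ * mi t| = |∫ x in a..b, R x * u t x| := by rw [hE, abs_neg]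
    _ ≤ ∫ x in a..b, |R x * u t x| := intervalIntegral.abs_integral_le_integral_abs hab.le
    _ ≤ ∫ x in a..b, (K / 2 * S) * |u t x| := by
        apply intervalIntegral.integral_mono_on hab.le (mkInt (fun x => |R x * u t x|) (hR_cont.mul hu').abs)
          (mkInt (fun x => K / 2 * S * |u t x|) (continuousOn_const.mul hu'.abs))
        intro x hx
        rw [abs_mul]
        have hRx : |R x| ≤ K / 2 * S :=
          le_trans (hRbound x hx)
            (mul_le_mul_of_nonneg_left (hS_ge x hx) (by linarith))
        exact mul_le_mul_of_nonneg_right hRx (abs_nonneg _)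
    _ = K / 2 * (∫ x in a..b, |u t x|) * S := by
        rw [intervalIntegral.integral_const_mul]
        ring
end

section
/- Let u^f ∈ C¹([0,T]×ℝ₊) be nonnegative and satisfy the transport equation ∂_t u^f(t,y) + ∂_y u^f(t,y) + c^f(t,y) u^f(t,y) = 0, where c^f is continuous. Let l_{j−1}(t) = t + l_{j−1}(0), l_j(t) = t + l_j(0) with 0 ≤ l_{j−1}(0) < l_j(0), suppose m_j(t) := ∫_{l_{j−1}(t)}^{l_j(t)} u^f(t,y) dy > 0 on [0,T], and define y_j(t) := (1/m_j(t)) ∫_{l_{j−1}(t)}^{l_j(t)} y u^f(t,y) dy. Then (d/dt) m_j(t) = −∫_{l_{j−1}(t)}^{l_j(t)} c^f(t,y) u^f(t,y) dy and (d/dt) y_j(t) = (1/m_j(t)) ∫_{l_{j−1}(t)}^{l_j(t)} (y_j(t) − y) c^f(t,y) u^f(t,y) dy + 1. -/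
open MeasureTheory Set intervalIntegral Asymptotics Metric
open scoped Interval

/-- Chain rule along the diagonal, assuming pointwise partial derivatives and
continuity of the `y`-partial, for a point in the interior of the domain. -/
lemma ebt_diag_hasDerivAt
    (T : ℝ) (g gt gy : ℝ → ℝ → ℝ)
    (hgt : ∀ t ∈ Icc (0:ℝ) T, ∀ y ∈ Ici (0:ℝ), HasDerivAt (fun s => g s y) (gt t y) t)
    (hgy : ∀ t ∈ Icc (0:ℝ) T, ∀ y ∈ Ici (0:ℝ), HasDerivAt (fun z => g t z) (gy t y) y)
    (hgy_cont : ContinuousOn (fun p : ℝ × ℝ => gy p.1 p.2) (Icc 0 T ×ˢ Ici 0))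
    {z x₀ : ℝ} (hz : 0 < z) (hx₀ : x₀ ∈ Ioo (0:ℝ) T) :
    HasDerivAt (fun x => g x (x + z)) (gt x₀ (x₀ + z) + gy x₀ (x₀ + z)) x₀ := by
  obtain ⟨hx₀0, hx₀T⟩ := hx₀
  have hx₀Icc : x₀ ∈ Icc (0:ℝ) T := ⟨hx₀0.le, hx₀T.le⟩
  have hy₀ : (0:ℝ) ≤ x₀ + z := by linarith
  rw [hasDerivAt_iff_isLittleO]
  have hB : (fun x => g x (x₀ + z) - g x₀ (x₀ + z) - (x - x₀) * gt x₀ (x₀ + z))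
      =o[nhds x₀] fun x => x - x₀ := by
    have := (hasDerivAt_iff_isLittleO).mp (hgt x₀ hx₀Icc (x₀ + z) hy₀)
    simpa [smul_eq_mul, mul_comm] using this
  have hA : (fun x => g x (x + z) - g x (x₀ + z) - (x - x₀) * gy x₀ (x₀ + z))
      =o[nhds x₀] fun x => x - x₀ := by
    rw [isLittleO_iff]
    intro ε hε
    have hmem : Icc (0:ℝ) T ×ˢ Ici (0:ℝ) ∈ nhds ((x₀ : ℝ), x₀ + z) := by
      have hopen : IsOpen (Ioo (0:ℝ) T ×ˢ Ioi (0:ℝ)) := isOpen_Ioo.prod isOpen_Ioi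
      refine Filter.mem_of_superset
        (hopen.mem_nhds (Set.mk_mem_prod ⟨hx₀0, hx₀T⟩ (Set.mem_Ioi.mpr (by linarith)))) ?_
      exact Set.prod_mono Ioo_subset_Icc_self Ioi_subset_Ici_self
    have hca : ContinuousAt (fun p : ℝ × ℝ => gy p.1 p.2) (x₀, x₀ + z) :=
      hgy_cont.continuousAt hmem
    obtain ⟨δ, hδpos, hδ⟩ := Metric.continuousAt_iff.mp hca ε hε
    set r : ℝ := min δ (min x₀ (min (T - x₀) z)) with hr
    have hrpos : 0 < r := by
      simp only [hr, lt_min_iff]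
      exact ⟨hδpos, hx₀0, by linarith, hz⟩
    have hrδ : r ≤ δ := min_le_left _ _
    have hrx₀ : r ≤ x₀ := (min_le_right _ _).trans (min_le_left _ _)
    have hrT : r ≤ T - x₀ := (min_le_right _ _).trans ((min_le_right _ _).trans (min_le_left _ _))
    have hrz : r ≤ z := (min_le_right _ _).trans ((min_le_right _ _).trans (min_le_right _ _))
    filter_upwards [Metric.ball_mem_nhds x₀ (half_pos hrpos)] with x hx
    have hxd : |x - x₀| < r / 2 := by
      simpa [Real.dist_eq] using hx
    obtain ⟨hxd1, hxd2⟩ := abs_lt.mp hxd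
    have hxIcc : x ∈ Icc (0:ℝ) T := ⟨by linarith, by linarith⟩
    set s : Set ℝ := uIcc (x₀ + z) (x + z) with hs
    have hsub : ∀ y ∈ s, |y - (x₀ + z)| ≤ |x - x₀| := by
      intro y hy
      rw [hs, Set.uIcc_eq_union] at hy
      have h2 := le_abs_self (x - x₀)
      have h3 := neg_abs_le (x - x₀)
      rcases hy with hy | hy
      · rw [abs_le]; exact ⟨by linarith [hy.1], by linarith [hy.2]⟩
      · rw [abs_le]; exact ⟨by linarith [hy.1], by linarith [hy.2]⟩
    have hspos : ∀ y ∈ s, (0:ℝ) ≤ y := by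
      intro y hy
      have h1 := abs_lt.mp (lt_of_le_of_lt (hsub y hy) hxd)
      linarith [h1.1]
    have hkey : ∀ y ∈ s, |gy x y - gy x₀ (x₀ + z)| ≤ ε := by
      intro y hy
      have hd : dist ((x : ℝ), y) ((x₀ : ℝ), x₀ + z) < δ := by
        rw [Prod.dist_eq]
        have h1 : dist x x₀ < δ := by rw [Real.dist_eq]; linarith
        have h2 : dist y (x₀ + z) < δ := by
          rw [Real.dist_eq]
          exact lt_of_le_of_lt (hsub y hy) (by linarith)
        exact max_lt h1 h2
      have := hδ hd
      rw [Real.dist_eq] at this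
      exact this.le
    have hderiv : ∀ y ∈ s, HasDerivWithinAt (fun w => g x w - gy x₀ (x₀ + z) * w)
        (gy x y - gy x₀ (x₀ + z)) s y := by
      intro y hy
      have h1 : HasDerivAt (fun w : ℝ => gy x₀ (x₀ + z) * w) (gy x₀ (x₀ + z)) y := by
        simpa using (hasDerivAt_id y).const_mul (gy x₀ (x₀ + z))
      exact ((hgy x hxIcc y (hspos y hy)).sub h1).hasDerivWithinAt
    have hbound : ∀ y ∈ s, ‖gy x y - gy x₀ (x₀ + z)‖ ≤ ε := fun y hy => by
      simpa [Real.norm_eq_abs] using hkey y hy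
    have hmvt := (convex_uIcc (x₀ + z) (x + z)).norm_image_sub_le_of_norm_hasDerivWithin_le
      hderiv hbound left_mem_uIcc right_mem_uIcc
    calc ‖g x (x + z) - g x (x₀ + z) - (x - x₀) * gy x₀ (x₀ + z)‖
        = ‖(g x (x + z) - gy x₀ (x₀ + z) * (x + z))
            - (g x (x₀ + z) - gy x₀ (x₀ + z) * (x₀ + z))‖ := by congr 1; ring
      _ ≤ ε * ‖(x + z) - (x₀ + z)‖ := hmvt
      _ = ε * ‖x - x₀‖ := by congr 1; ring
  have hsum := hA.add hB
  refine hsum.congr' (Filter.Eventually.of_forall fun x => ?_) Filter.EventuallyEq.rfl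
  simp only [smul_eq_mul]; ring

/-- Leibniz rule for an integral over a moving cohort interval. -/
lemma ebt_moving_integral_hasDerivAt
    (T : ℝ) (g gt gy : ℝ → ℝ → ℝ)
    (hgt : ∀ t ∈ Icc (0:ℝ) T, ∀ y ∈ Ici (0:ℝ), HasDerivAt (fun s => g s y) (gt t y) t)
    (hgy : ∀ t ∈ Icc (0:ℝ) T, ∀ y ∈ Ici (0:ℝ), HasDerivAt (fun z => g t z) (gy t y) y)
    (hg_cont : ContinuousOn (fun p : ℝ × ℝ => g p.1 p.2) (Icc 0 T ×ˢ Ici 0))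
    (hgt_cont : ContinuousOn (fun p : ℝ × ℝ => gt p.1 p.2) (Icc 0 T ×ˢ Ici 0))
    (hgy_cont : ContinuousOn (fun p : ℝ × ℝ => gy p.1 p.2) (Icc 0 T ×ˢ Ici 0))
    (l₀ l₁ : ℝ) (hl₀ : 0 ≤ l₀) (hl : l₀ < l₁)
    {t : ℝ} (ht : t ∈ Ioo (0:ℝ) T) :
    HasDerivAt (fun s => ∫ y in (s + l₀)..(s + l₁), g s y)
      (∫ y in (t + l₀)..(t + l₁), (gt t y + gy t y)) t := by
  obtain ⟨ht0, htT⟩ := ht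
  have htIcc : t ∈ Icc (0:ℝ) T := ⟨ht0.le, htT.le⟩
  have hε : (0:ℝ) < min t (T - t) := lt_min ht0 (by linarith)
  -- membership facts
  have hball : ∀ x ∈ ball t (min t (T - t)), x ∈ Ioo (0:ℝ) T := by
    intro x hx
    rw [mem_ball, Real.dist_eq] at hx
    obtain ⟨h1, h2⟩ := abs_lt.mp hx
    have := min_le_left t (T - t); have := min_le_right t (T - t)
    constructor <;> linarith
  have hmemz : ∀ z ∈ Ι l₀ l₁, z ∈ Icc l₀ l₁ := by
    intro z hz
    rw [uIoc_of_le hl.le] at hz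
    exact ⟨hz.1.le, hz.2⟩
  have hzpos : ∀ z ∈ Ι l₀ l₁, 0 < z := by
    intro z hz
    rw [uIoc_of_le hl.le] at hz
    linarith [hz.1]
  -- bound for the derivative on the compact set
  have hK : IsCompact (Icc (0:ℝ) T ×ˢ Icc (0:ℝ) (T + l₁)) :=
    isCompact_Icc.prod isCompact_Icc
  have hKsub : (Icc (0:ℝ) T ×ˢ Icc (0:ℝ) (T + l₁)) ⊆ Icc (0:ℝ) T ×ˢ Ici (0:ℝ) :=
    Set.prod_mono le_rfl Icc_subset_Ici_self
  obtain ⟨C₁, hC₁⟩ := hK.exists_bound_of_continuousOn (hgt_cont.mono hKsub)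
  obtain ⟨C₂, hC₂⟩ := hK.exists_bound_of_continuousOn (hgy_cont.mono hKsub)
  have hmemK : ∀ x ∈ ball t (min t (T - t)), ∀ z ∈ Ι l₀ l₁,
      ((x : ℝ), x + z) ∈ Icc (0:ℝ) T ×ˢ Icc (0:ℝ) (T + l₁) := by
    intro x hx z hz
    obtain ⟨hx0, hxT⟩ := hball x hx
    obtain ⟨hz0, hz1⟩ := hmemz z hz
    exact Set.mk_mem_prod ⟨hx0.le, hxT.le⟩ ⟨by linarith, by linarith⟩
  -- apply the parametric differentiation theorem
  have main := intervalIntegral.hasDerivAt_integral_of_dominated_loc_of_deriv_le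
      (F := fun x z => g x (x + z)) (F' := fun x z => gt x (x + z) + gy x (x + z))
      (x₀ := t) (a := l₀) (b := l₁) (bound := fun _ => |C₁| + |C₂|) (μ := volume) (Metric.ball_mem_nhds t hε)
      ?_ ?_ ?_ ?_ ?_ ?_
  · -- rewrite function and derivative
    have heq : (fun s => ∫ y in (s + l₀)..(s + l₁), g s y)
        = fun x => ∫ z in l₀..l₁, g x (x + z) := by
      funext s
      rw [intervalIntegral.integral_comp_add_left (fun y => g s y) s]
    rw [heq]
    have hval : (∫ z in l₀..l₁, (gt t (t + z) + gy t (t + z)))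
        = ∫ y in (t + l₀)..(t + l₁), (gt t y + gy t y) := by
      rw [intervalIntegral.integral_comp_add_left (fun y => gt t y + gy t y) t]
    rw [← hval]
    exact main.2
  · -- measurability of F x near t
    filter_upwards [Metric.ball_mem_nhds t hε] with x hx
    have hxI := hball x hx
    apply ContinuousOn.aestronglyMeasurable _ measurableSet_uIoc
    intro z hz
    have hzc : z ∈ Icc l₀ l₁ := hmemz z hz
    have h1 : ContinuousWithinAt (fun p : ℝ × ℝ => g p.1 p.2) (Icc 0 T ×ˢ Ici 0) (x, x + z) :=
      hg_cont _ (Set.mk_mem_prod ⟨hxI.1.le, hxI.2.le⟩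
        (Set.mem_Ici.mpr (by linarith [hzc.1, hxI.1])))
    have h2 : ContinuousWithinAt (fun w : ℝ => ((x : ℝ), x + w)) (Ι l₀ l₁) z :=
      (continuous_const.prodMk (continuous_const.add continuous_id)).continuousWithinAt
    have h3 : Set.MapsTo (fun w : ℝ => ((x : ℝ), x + w)) (Ι l₀ l₁) (Icc 0 T ×ˢ Ici 0) := by
      intro w hw
      exact Set.mk_mem_prod ⟨hxI.1.le, hxI.2.le⟩
        (Set.mem_Ici.mpr (by linarith [(hmemz w hw).1, hxI.1]))
    show ContinuousWithinAt ((fun p : ℝ × ℝ => g p.1 p.2) ∘ (fun w : ℝ => (x, x + w)))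
      (Ι l₀ l₁) z
    exact ContinuousWithinAt.comp h1 h2 h3
  · -- integrability of F t
    apply ContinuousOn.intervalIntegrable
    intro z hz
    rw [uIcc_of_le hl.le] at hz
    have h1 : ContinuousWithinAt (fun p : ℝ × ℝ => g p.1 p.2) (Icc 0 T ×ˢ Ici 0) (t, t + z) :=
      hg_cont _ (Set.mk_mem_prod htIcc (Set.mem_Ici.mpr (by linarith [hz.1])))
    have h2 : ContinuousWithinAt (fun w : ℝ => ((t : ℝ), t + w)) (uIcc l₀ l₁) z :=
      (continuous_const.prodMk (continuous_const.add continuous_id)).continuousWithinAt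
    have h3 : Set.MapsTo (fun w : ℝ => ((t : ℝ), t + w)) (uIcc l₀ l₁) (Icc 0 T ×ˢ Ici 0) := by
      intro w hw
      rw [uIcc_of_le hl.le] at hw
      exact Set.mk_mem_prod htIcc (Set.mem_Ici.mpr (by linarith [hw.1]))
    show ContinuousWithinAt ((fun p : ℝ × ℝ => g p.1 p.2) ∘ (fun w : ℝ => (t, t + w)))
      (uIcc l₀ l₁) z
    exact ContinuousWithinAt.comp h1 h2 h3
  · -- measurability of F' t
    apply ContinuousOn.aestronglyMeasurable _ measurableSet_uIoc
    intro z hz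
    have hzc := hmemz z hz
    have hmem : ((t:ℝ), t + z) ∈ Icc (0:ℝ) T ×ˢ Ici (0:ℝ) :=
      Set.mk_mem_prod htIcc (Set.mem_Ici.mpr (by linarith [hzc.1]))
    have h1 : ContinuousWithinAt (fun p : ℝ × ℝ => gt p.1 p.2 + gy p.1 p.2)
        (Icc 0 T ×ˢ Ici 0) (t, t + z) := (hgt_cont _ hmem).add (hgy_cont _ hmem)
    have h2 : ContinuousWithinAt (fun w : ℝ => ((t : ℝ), t + w)) (Ι l₀ l₁) z :=
      (continuous_const.prodMk (continuous_const.add continuous_id)).continuousWithinAt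
    have h3 : Set.MapsTo (fun w : ℝ => ((t : ℝ), t + w)) (Ι l₀ l₁) (Icc 0 T ×ˢ Ici 0) := by
      intro w hw
      exact Set.mk_mem_prod htIcc (Set.mem_Ici.mpr (by linarith [(hmemz w hw).1]))
    show ContinuousWithinAt ((fun p : ℝ × ℝ => gt p.1 p.2 + gy p.1 p.2) ∘
      (fun w : ℝ => (t, t + w))) (Ι l₀ l₁) z
    exact ContinuousWithinAt.comp h1 h2 h3
  · -- bound
    refine Filter.Eventually.of_forall fun z hz x hx => ?_
    have hmem := hmemK x hx z hz
    have := hC₁ _ hmem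
    have := hC₂ _ hmem
    have h1 := (hC₁ _ hmem).trans (le_abs_self C₁)
    have h2 := (hC₂ _ hmem).trans (le_abs_self C₂)
    calc ‖gt x (x + z) + gy x (x + z)‖ ≤ ‖gt x (x + z)‖ + ‖gy x (x + z)‖ := norm_add_le _ _
      _ ≤ |C₁| + |C₂| := add_le_add h1 h2
  · exact intervalIntegrable_const
  · -- differentiability
    refine Filter.Eventually.of_forall fun z hz x hx => ?_
    exact ebt_diag_hasDerivAt T g gt gy hgt hgy hgy_cont (hzpos z hz) (hball x hx)

/-- For the female density of the two-sex model, the mass and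
location of an internal cohort moving along characteristics satisfy
`(d/dt) mⱼ(t) = −∫_{Ωⱼ(t)} c^f u^f dy` and
`(d/dt) yⱼ(t) = (1/mⱼ(t)) ∫_{Ωⱼ(t)} (yⱼ(t) − y) c^f u^f dy + 1`. -/
theorem ebt_female_cohort_mass_and_location_derivative
    (T : ℝ) (hT : 0 < T)
    (u ut uy c : ℝ → ℝ → ℝ)
    (hu_nonneg : ∀ t ∈ Icc (0:ℝ) T, ∀ y ∈ Ici (0:ℝ), 0 ≤ u t y)
    (hut : ∀ t ∈ Icc (0:ℝ) T, ∀ y ∈ Ici (0:ℝ), HasDerivAt (fun s => u s y) (ut t y) t)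
    (huy : ∀ t ∈ Icc (0:ℝ) T, ∀ y ∈ Ici (0:ℝ), HasDerivAt (fun z => u t z) (uy t y) y)
    (hu_cont : ContinuousOn (fun p : ℝ × ℝ => u p.1 p.2) (Icc 0 T ×ˢ Ici 0))
    (hut_cont : ContinuousOn (fun p : ℝ × ℝ => ut p.1 p.2) (Icc 0 T ×ˢ Ici 0))
    (huy_cont : ContinuousOn (fun p : ℝ × ℝ => uy p.1 p.2) (Icc 0 T ×ˢ Ici 0))
    (hc_cont : ContinuousOn (fun p : ℝ × ℝ => c p.1 p.2) (Icc 0 T ×ˢ Ici 0))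
    (hpde : ∀ t ∈ Icc (0:ℝ) T, ∀ y ∈ Ici (0:ℝ), ut t y + uy t y + c t y * u t y = 0)
    (l₀ l₁ : ℝ) (hl₀ : 0 ≤ l₀) (hl : l₀ < l₁)
    (mj yj : ℝ → ℝ)
    (hmj : ∀ s, mj s = ∫ y in (s + l₀)..(s + l₁), u s y)
    (hmj_pos : ∀ t ∈ Icc (0:ℝ) T, 0 < mj t)
    (hyj : ∀ s, yj s = (1 / mj s) * ∫ y in (s + l₀)..(s + l₁), y * u s y) :
    ∀ t ∈ Ioo (0:ℝ) T,
      HasDerivAt mj (-∫ y in (t + l₀)..(t + l₁), c t y * u t y) t ∧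
      HasDerivAt yj
        ((1 / mj t) * (∫ y in (t + l₀)..(t + l₁), (yj t - y) * (c t y * u t y)) + 1) t := by
  intro t ht
  obtain ⟨ht0, htT⟩ := ht
  have htIcc : t ∈ Icc (0:ℝ) T := ⟨ht0.le, htT.le⟩
  have hmne : mj t ≠ 0 := (hmj_pos t htIcc).ne'
  -- points of the cohort interval are nonneg
  have hyIci : ∀ y ∈ uIcc (t + l₀) (t + l₁), y ∈ Ici (0:ℝ) := by
    intro y hy
    rw [uIcc_of_le (by linarith)] at hy
    simp only [mem_Ici]
    linarith [hy.1]
  -- continuity on the cohort interval of various integrands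
  have hslice : ∀ f : ℝ → ℝ → ℝ, ContinuousOn (fun p : ℝ × ℝ => f p.1 p.2) (Icc 0 T ×ˢ Ici 0) →
      ContinuousOn (fun y => f t y) (uIcc (t + l₀) (t + l₁)) := by
    intro f hf y hy
    have h1 : ContinuousWithinAt (fun p : ℝ × ℝ => f p.1 p.2) (Icc 0 T ×ˢ Ici 0) (t, y) :=
      hf _ (Set.mk_mem_prod htIcc (hyIci y hy))
    have h2 : ContinuousWithinAt (fun w : ℝ => ((t : ℝ), w)) (uIcc (t + l₀) (t + l₁)) y :=
      (continuous_const.prodMk continuous_id).continuousWithinAt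
    have h3 : Set.MapsTo (fun w : ℝ => ((t : ℝ), w)) (uIcc (t + l₀) (t + l₁))
        (Icc 0 T ×ˢ Ici 0) := fun w hw => Set.mk_mem_prod htIcc (hyIci w hw)
    show ContinuousWithinAt ((fun p : ℝ × ℝ => f p.1 p.2) ∘ (fun w : ℝ => (t, w)))
      (uIcc (t + l₀) (t + l₁)) y
    exact ContinuousWithinAt.comp h1 h2 h3
  have hInt_u : IntervalIntegrable (fun y => u t y) volume (t + l₀) (t + l₁) :=
    (hslice u hu_cont).intervalIntegrable
  have hInt_cu : IntervalIntegrable (fun y => c t y * u t y) volume (t + l₀) (t + l₁) :=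
    ((hslice c hc_cont).mul (hslice u hu_cont)).intervalIntegrable
  have hInt_ycu : IntervalIntegrable (fun y => y * (c t y * u t y)) volume (t + l₀) (t + l₁) :=
    (continuousOn_id.mul ((hslice c hc_cont).mul (hslice u hu_cont))).intervalIntegrable
  -- derivative of mj
  have hm' : HasDerivAt mj (∫ y in (t + l₀)..(t + l₁), (ut t y + uy t y)) t := by
    have heq : mj = fun s => ∫ y in (s + l₀)..(s + l₁), u s y := funext hmj
    rw [heq]
    exact ebt_moving_integral_hasDerivAt T u ut uy hut huy hu_cont hut_cont huy_cont
      l₀ l₁ hl₀ hl ⟨ht0, htT⟩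
  have hmval : (∫ y in (t + l₀)..(t + l₁), (ut t y + uy t y))
      = -∫ y in (t + l₀)..(t + l₁), c t y * u t y := by
    rw [← intervalIntegral.integral_neg]
    apply intervalIntegral.integral_congr
    intro y hy
    have := hpde t htIcc y (hyIci y hy)
    show ut t y + uy t y = -(c t y * u t y)
    linarith
  have hmderiv : HasDerivAt mj (-∫ y in (t + l₀)..(t + l₁), c t y * u t y) t := by
    rw [← hmval]; exact hm'
  refine ⟨hmderiv, ?_⟩
  -- derivative of the first moment n
  set n : ℝ → ℝ := fun s => ∫ y in (s + l₀)..(s + l₁), y * u s y with hn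
  have hn' : HasDerivAt n (∫ y in (t + l₀)..(t + l₁), (y * ut t y + (u t y + y * uy t y))) t := by
    apply ebt_moving_integral_hasDerivAt T (fun s y => y * u s y) (fun s y => y * ut s y)
      (fun s y => u s y + y * uy s y) ?_ ?_ ?_ ?_ ?_ l₀ l₁ hl₀ hl ⟨ht0, htT⟩
    · intro s hs y hy
      exact (hut s hs y hy).const_mul y
    · intro s hs y hy
      have := (hasDerivAt_id' (x := y)).mul (huy s hs y hy)
      simpa [add_comm, Pi.mul_def] using this
    · exact (continuous_snd.continuousOn).mul hu_cont
    · exact (continuous_snd.continuousOn).mul hut_cont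
    · exact hu_cont.add ((continuous_snd.continuousOn).mul huy_cont)
  have hnval : (∫ y in (t + l₀)..(t + l₁), (y * ut t y + (u t y + y * uy t y)))
      = (∫ y in (t + l₀)..(t + l₁), u t y) - ∫ y in (t + l₀)..(t + l₁), y * (c t y * u t y) := by
    rw [← intervalIntegral.integral_sub hInt_u hInt_ycu]
    apply intervalIntegral.integral_congr
    intro y hy
    have := hpde t htIcc y (hyIci y hy)
    show y * ut t y + (u t y + y * uy t y) = u t y - y * (c t y * u t y)
    linear_combination y * this
  -- derivative of yj = n / mj
  have hyj_eq : yj = fun s => n s / mj s := by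
    funext s
    rw [hyj s, one_div, hn]
    ring
  have hdiv := hn'.div hm' hmne
  rw [show n / mj = yj from by rw [hyj_eq]; rfl] at hdiv
  refine hdiv.congr_deriv ?_
  -- algebraic identification of the derivative value
  have hIm : (∫ y in (t + l₀)..(t + l₁), u t y) = mj t := (hmj t).symm
  have hnt : n t = mj t * yj t := by
    rw [hyj t, hn]
    field_simp
  have hsplit : (∫ y in (t + l₀)..(t + l₁), (yj t - y) * (c t y * u t y))
      = yj t * (∫ y in (t + l₀)..(t + l₁), c t y * u t y)
        - ∫ y in (t + l₀)..(t + l₁), y * (c t y * u t y) := by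
    rw [← intervalIntegral.integral_const_mul, ← intervalIntegral.integral_sub
      (hInt_cu.const_mul (yj t)) hInt_ycu]
    apply intervalIntegral.integral_congr
    intro y _
    ring
  rw [hsplit, hnval, hmval, hIm, hnt]
  set I := ∫ y in (t + l₀)..(t + l₁), c t y * u t y
  set J := ∫ y in (t + l₀)..(t + l₁), y * (c t y * u t y)
  field_simp
  ring
end
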